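/- arXiv:1705.02582 — 5 statements merged into one kernel-verified Lean document; each statement's English description precedes it below -/
import Mathlib

section
/- Let Γ = (ω^ω, E) be a graph whose vertex set is the Baire space ω^ω, such that the edge relation E is a closed subset of ω^ω × ω^ω, and let 𝔭 : ω^ω → {pⁿ : p prime, n ≥ 1} ∪ {∞} be a coloring such that 𝔭(η) depends only on η(0). Then the graph product G = G(Γ, 𝔭) admits a left-invariant separable group ultrametric which extends the standard metric on the Baire space ω^ω (identifying each η ∈ ω^ω with the corresponding generator of G). -/
/-- The defining relations of the graph product of cyclic groups `G(Γ, 𝔭)`: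
for each vertex `a` the relation `a ^ 𝔭(a) = 1` (where the value `𝔭(a) = 0`
encodes `∞`, i.e. no relation), and for each edge `a E b` the commutator
relation `a b a⁻¹ b⁻¹ = 1`. -/
def graphProdRels {V : Type*} (E : V → V → Prop) (p : V → ℕ) : Set (FreeGroup V) :=
  {w | ∃ a : V, w = FreeGroup.of a ^ p a} ∪
  {w | ∃ a b : V, E a b ∧
    w = FreeGroup.of a * FreeGroup.of b * (FreeGroup.of a)⁻¹ * (FreeGroup.of b)⁻¹}

/-- The graph product of cyclic groups `G(Γ, 𝔭)`. -/
abbrev GraphProd {V : Type*} (E : V → V → Prop) (p : V → ℕ) : Type _ :=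
  PresentedGroup (graphProdRels E p)

/-- The generator of `G(Γ, 𝔭)` corresponding to the vertex `v`. -/
def GraphProd.gen {V : Type*} (E : V → V → Prop) (p : V → ℕ) (v : V) : GraphProd E p :=
  PresentedGroup.of v

open scoped commutatorElement

def extZ {n : ℕ} (s : Fin n → ℕ) : ℕ → ℕ := fun i => if h : i < n then s ⟨i, h⟩ else 0

lemma extZ_lt {n : ℕ} (s : Fin n → ℕ) (i : ℕ) (h : i < n) : extZ s i = s ⟨i, h⟩ := dif_pos h
section Phi
variable (E : (ℕ → ℕ) → (ℕ → ℕ) → Prop) (p : (ℕ → ℕ) → ℕ) (n : ℕ)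

abbrev PhiTarget : Type := Multiplicative (∀ s : Fin (n+1) → ℕ, ZMod (p (extZ s)))

noncomputable def phiAux : (ℕ → ℕ) → PhiTarget p n :=
  fun η => Multiplicative.ofAdd
    (Pi.single (M := fun s : Fin (n+1) → ℕ => ZMod (p (extZ s))) (fun i => η i.1) 1)

lemma phi_rels (hdep : ∀ η ν : ℕ → ℕ, η 0 = ν 0 → p η = p ν) :
    ∀ r ∈ graphProdRels E p, FreeGroup.lift (phiAux p n) r = 1 := by
  rintro r (⟨a, rfl⟩ | ⟨a, b, _, rfl⟩)
  · rw [map_pow, FreeGroup.lift_apply_of]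
    set s₀ : Fin (n+1) → ℕ := fun i => a i.1 with hs₀
    have hpa : p (extZ s₀) = p a := by
      apply hdep
      have h0 : (0 : ℕ) < n + 1 := Nat.succ_pos n
      simp [extZ, hs₀, h0]
    rw [phiAux, ← ofAdd_nsmul, ofAdd_eq_one]
    funext s
    rw [Pi.smul_apply]
    by_cases hs : s = s₀
    · subst hs
      simp only [Pi.single_eq_same, Pi.zero_apply, nsmul_eq_mul, mul_one, ← hpa,
        ZMod.natCast_self, zero_mul]
    · simp only [Pi.single_eq_of_ne (by rwa [hs₀] at hs), smul_zero, Pi.zero_apply]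
  · simp only [map_mul, map_inv, FreeGroup.lift_apply_of]
    rw [show (phiAux p n a * phiAux p n b * (phiAux p n a)⁻¹ * (phiAux p n b)⁻¹ : PhiTarget p n)
      = ⁅phiAux p n a, phiAux p n b⁆ from rfl]
    exact commutatorElement_eq_one_iff_commute.2 (mul_comm _ _)

noncomputable def phi (hdep : ∀ η ν : ℕ → ℕ, η 0 = ν 0 → p η = p ν) :
    GraphProd E p →* PhiTarget p n :=
  PresentedGroup.toGroup (phi_rels E p n hdep)

lemma phi_gen (hdep : ∀ η ν : ℕ → ℕ, η 0 = ν 0 → p η = p ν) (η : ℕ → ℕ) :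
    phi E p n hdep (GraphProd.gen E p η) = phiAux p n η :=
  PresentedGroup.toGroup.of _

section KK
variable (E : (ℕ → ℕ) → (ℕ → ℕ) → Prop) (p : (ℕ → ℕ) → ℕ)

def KK (n : ℕ) : Subgroup (GraphProd E p) :=
  Subgroup.normalClosure
    {g | ∃ η ν : ℕ → ℕ, (∀ i < n, η i = ν i) ∧ g = (GraphProd.gen E p η)⁻¹ * GraphProd.gen E p ν}

instance KK_normal (n : ℕ) : (KK E p n).Normal := Subgroup.normalClosure_normal

lemma KK_antitone {m n : ℕ} (h : m ≤ n) : KK E p n ≤ KK E p m :=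
  Subgroup.normalClosure_mono (by
    rintro g ⟨η, ν, hpre, rfl⟩
    exact ⟨η, ν, fun i hi => hpre i (lt_of_lt_of_le hi h), rfl⟩)

lemma mem_KK_of_prefix {n : ℕ} {η ν : ℕ → ℕ} (h : ∀ i < n, η i = ν i) :
    (GraphProd.gen E p η)⁻¹ * GraphProd.gen E p ν ∈ KK E p n :=
  Subgroup.subset_normalClosure ⟨η, ν, h, rfl⟩

end KK

section PhiKK
variable (E : (ℕ → ℕ) → (ℕ → ℕ) → Prop) (p : (ℕ → ℕ) → ℕ) (n : ℕ)
  (hdep : ∀ η ν : ℕ → ℕ, η 0 = ν 0 → p η = p ν)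

lemma KK_le_phi_ker : KK E p (n+1) ≤ (phi E p n hdep).ker := by
  apply Subgroup.normalClosure_le_normal
  rintro g ⟨η, ν, hpre, rfl⟩
  rw [SetLike.mem_coe, MonoidHom.mem_ker, map_mul, map_inv, phi_gen, phi_gen]
  have : phiAux p n η = phiAux p n ν := by
    unfold phiAux
    congr 1
    have : (fun i : Fin (n+1) => η i.1) = (fun i : Fin (n+1) => ν i.1) := by
      funext i; exact hpre i.1 i.isLt
    rw [this]
  rw [this, inv_mul_cancel]

lemma not_mem_KK (hp : ∀ η, p η ≠ 0 → IsPrimePow (p η))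
    (hdep' : ∀ η ν : ℕ → ℕ, η 0 = ν 0 → p η = p ν) {η ν : ℕ → ℕ} {m : ℕ} (hm : m < n + 1)
    (hne : η m ≠ ν m) :
    (GraphProd.gen E p η)⁻¹ * GraphProd.gen E p ν ∉ KK E p (n+1) := by
  intro hmem
  have h1 : phi E p n hdep' ((GraphProd.gen E p η)⁻¹ * GraphProd.gen E p ν) = 1 :=
    KK_le_phi_ker E p n hdep' hmem
  rw [map_mul, map_inv, phi_gen, phi_gen] at h1
  have hsne : (fun i : Fin (n+1) => η i.1) ≠ (fun i : Fin (n+1) => ν i.1) := by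
    intro hc
    exact hne (congrFun hc ⟨m, hm⟩)
  have h2 := congrArg Multiplicative.toAdd h1
  simp only [toAdd_mul, toAdd_inv, toAdd_one] at h2
  have h3 := congrFun h2 (fun i : Fin (n+1) => η i.1)
  unfold phiAux at h3
  simp only [toAdd_ofAdd, Pi.add_apply, Pi.neg_apply, Pi.single_eq_same,
    Pi.single_eq_of_ne hsne, add_zero, Pi.zero_apply] at h3
  have : Nontrivial (ZMod (p (extZ (fun i : Fin (n+1) => η i.1)))) := by
    rw [ZMod.nontrivial_iff]
    intro hone
    rcases Nat.eq_zero_or_pos (p (extZ (fun i : Fin (n+1) => η i.1))) with h0 | hpos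
    · rw [h0] at hone; exact absurd hone (by norm_num)
    · have := hp (extZ (fun i : Fin (n+1) => η i.1)) (by omega)
      rw [hone] at this
      exact (not_isPrimePow_one) this
  rw [neg_eq_zero] at h3
  exact one_ne_zero h3

end PhiKK

section Psi

lemma lift_letter_congr {α β : Type*} [DecidableEq α] [Group β] (f₁ f₂ : α → β) (w : FreeGroup α)
    (h : ∀ v ∈ w.toWord.map Prod.fst, f₁ v = f₂ v) :
    FreeGroup.lift f₁ w = FreeGroup.lift f₂ w := by
  conv_lhs => rw [← FreeGroup.mk_toWord (x := w)]
  conv_rhs => rw [← FreeGroup.mk_toWord (x := w)]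
  rw [FreeGroup.lift_mk, FreeGroup.lift_mk]
  congr 1
  apply List.map_congr_left
  intro x hx
  rw [h x.1 (List.mem_map_of_mem hx)]

lemma stab' {E : (ℕ → ℕ) → (ℕ → ℕ) → Prop}
    (hEclosed : IsClosed {q : (ℕ → ℕ) × (ℕ → ℕ) | E q.1 q.2})
    (s t : ℕ → ℕ) (h : ¬ E s t) :
    ∃ N, ∀ α β : ℕ → ℕ, (∀ i < N, α i = s i) → (∀ i < N, β i = t i) → ¬ E α β := by
  by_contra hc
  push_neg at hc
  choose a b ha hb hE using hc
  apply h
  have hta : Filter.Tendsto a Filter.atTop (nhds s) := by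
    rw [tendsto_pi_nhds]
    intro i
    apply Filter.Tendsto.congr' _ tendsto_const_nhds
    filter_upwards [Filter.eventually_ge_atTop (i+1)] with N hN
    exact (ha N i hN).symm
  have htb : Filter.Tendsto b Filter.atTop (nhds t) := by
    rw [tendsto_pi_nhds]
    intro i
    apply Filter.Tendsto.congr' _ tendsto_const_nhds
    filter_upwards [Filter.eventually_ge_atTop (i+1)] with N hN
    exact (hb N i hN).symm
  exact hEclosed.mem_of_tendsto (hta.prodMk_nhds htb)
    (Filter.Eventually.of_forall (fun N => hE N))

variable {E : (ℕ → ℕ) → (ℕ → ℕ) → Prop} {p : (ℕ → ℕ) → ℕ}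

lemma gen_eq_mk (a : ℕ → ℕ) :
    GraphProd.gen E p a = PresentedGroup.mk (graphProdRels E p) (FreeGroup.of a) := rfl

lemma gen_pow_eq_one (a : ℕ → ℕ) : (GraphProd.gen E p a) ^ (p a) = 1 := by
  have h1 : PresentedGroup.mk (graphProdRels E p) (FreeGroup.of a ^ p a) = 1 := by
    apply (QuotientGroup.eq_one_iff _).2
    exact Subgroup.subset_normalClosure (Or.inl ⟨a, rfl⟩)
  rw [gen_eq_mk, ← map_pow]
  exact h1

lemma gen_comm {a b : ℕ → ℕ} (h : E a b) :
    GraphProd.gen E p a * GraphProd.gen E p b = GraphProd.gen E p b * GraphProd.gen E p a := by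
  have h1 : PresentedGroup.mk (graphProdRels E p)
      (FreeGroup.of a * FreeGroup.of b * (FreeGroup.of a)⁻¹ * (FreeGroup.of b)⁻¹) = 1 := by
    apply (QuotientGroup.eq_one_iff _).2
    exact Subgroup.subset_normalClosure (Or.inr ⟨a, b, h, rfl⟩)
  have h2 : GraphProd.gen E p a * GraphProd.gen E p b * (GraphProd.gen E p a)⁻¹ *
      (GraphProd.gen E p b)⁻¹ = 1 := by
    simpa [gen_eq_mk, map_mul, map_inv] using h1
  have h3 : ⁅GraphProd.gen E p a, GraphProd.gen E p b⁆ = 1 := by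
    rw [commutatorElement_def]; exact h2
  exact (commutatorElement_eq_one_iff_commute.1 h3).eq

lemma exists_KK_vanish
    (hEclosed : IsClosed {q : (ℕ → ℕ) × (ℕ → ℕ) | E q.1 q.2})
    (hdep : ∀ η ν : ℕ → ℕ, η 0 = ν 0 → p η = p ν)
    (g : GraphProd E p) :
    ∃ N : ℕ, g ∈ KK E p N → g = 1 := by
  classical
  obtain ⟨w, hw⟩ := PresentedGroup.mk_surjective (graphProdRels E p) g
  set T : Finset (ℕ → ℕ) := (w.toWord.map Prod.fst).toFinset with hT
  set b : (ℕ → ℕ) → (ℕ → ℕ) → ℕ :=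
    fun s t => if h : ∃ i, s i ≠ t i then Nat.find h + 1 else 0 with hbdef
  set e : (ℕ → ℕ) → (ℕ → ℕ) → ℕ :=
    fun s t => if h : ¬ E s t then (stab' hEclosed s t h).choose else 0 with hedef
  set N : ℕ := max 1 (max (T.sup fun s => T.sup fun t => b s t)
    (T.sup fun s => T.sup fun t => e s t)) with hN
  have hN1 : 1 ≤ N := le_max_left _ _
  have hbN : ∀ s ∈ T, ∀ t ∈ T, b s t ≤ N := by
    intro s hs t ht
    calc b s t ≤ T.sup fun t => b s t := Finset.le_sup ht
    _ ≤ T.sup fun s => T.sup fun t => b s t :=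
        Finset.le_sup (f := fun s => T.sup fun t => b s t) hs
    _ ≤ N := le_trans (le_max_left _ _) (le_max_right _ _)
  have heN : ∀ s ∈ T, ∀ t ∈ T, e s t ≤ N := by
    intro s hs t ht
    calc e s t ≤ T.sup fun t => e s t := Finset.le_sup ht
    _ ≤ T.sup fun s => T.sup fun t => e s t :=
        Finset.le_sup (f := fun s => T.sup fun t => e s t) hs
    _ ≤ N := le_trans (le_max_right _ _) (le_max_right _ _)
  -- prefix separation
  have hsep : ∀ s ∈ T, ∀ t ∈ T, (∀ i < N, s i = t i) → s = t := by
    intro s hs t ht hpre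
    by_contra hne
    have hex : ∃ i, s i ≠ t i := by
      by_contra hc; push_neg at hc; exact hne (funext hc)
    have : Nat.find hex < N := by
      have := hbN s hs t ht
      rw [hbdef] at this
      simp only [dif_pos hex] at this
      omega
    exact Nat.find_spec hex (hpre _ this)
  -- edge stabilization
  have hedge : ∀ s ∈ T, ∀ t ∈ T, ¬ E s t → ∀ α β : ℕ → ℕ,
      (∀ i < N, α i = s i) → (∀ i < N, β i = t i) → ¬ E α β := by
    intro s hs t ht hnE α β hα hβ
    have hle := heN s hs t ht
    rw [hedef] at hle
    simp only [dif_pos hnE] at hle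
    exact (stab' hEclosed s t hnE).choose_spec α β
      (fun i hi => hα i (lt_of_lt_of_le hi hle))
      (fun i hi => hβ i (lt_of_lt_of_le hi hle))
  -- the retraction-like map
  set Fb : (Fin N → ℕ) → GraphProd E p := fun s =>
    if h : ∃ t ∈ T, ∀ i : Fin N, t i.1 = s i then GraphProd.gen E p h.choose else 1 with hFb
  set F : (ℕ → ℕ) → GraphProd E p := fun η => Fb (fun i => η i.1) with hF
  have hFpre : ∀ η ν : ℕ → ℕ, (∀ i < N, η i = ν i) → F η = F ν := by
    intro η ν h
    rw [hF]
    simp only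
    congr 1
    funext i
    exact h i.1 i.isLt
  have hFcase : ∀ η : ℕ → ℕ, F η = 1 ∨
      ∃ t ∈ T, (∀ i < N, t i = η i) ∧ F η = GraphProd.gen E p t := by
    intro η
    rw [hF, hFb]
    simp only
    by_cases h : ∃ t ∈ T, ∀ i : Fin N, t i.1 = η i.1
    · right
      refine ⟨h.choose, h.choose_spec.1, ?_, by rw [dif_pos h]⟩
      intro i hi
      exact h.choose_spec.2 ⟨i, hi⟩
    · left; rw [dif_neg h]
  have hFt : ∀ t ∈ T, F t = GraphProd.gen E p t := by
    intro t ht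
    have h : ∃ u ∈ T, ∀ i : Fin N, u i.1 = t i.1 := ⟨t, ht, fun _ => rfl⟩
    have : F t = GraphProd.gen E p h.choose := by
      rw [hF, hFb]; simp only; rw [dif_pos h]
    rw [this]
    congr 1
    exact hsep h.choose h.choose_spec.1 t ht (fun i hi => h.choose_spec.2 ⟨i, hi⟩)
  -- F respects the relations
  have hrels : ∀ r ∈ graphProdRels E p, FreeGroup.lift F r = 1 := by
    rintro r (⟨a, rfl⟩ | ⟨a, b', hab, rfl⟩)
    · rw [map_pow, FreeGroup.lift_apply_of]
      rcases hFcase a with h1 | ⟨t, _, hpre, hgen⟩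
      · rw [h1, one_pow]
      · rw [hgen]
        have h0 : a 0 = t 0 := (hpre 0 (lt_of_lt_of_le Nat.zero_lt_one hN1)).symm
        have : p a = p t := hdep a t h0
        rw [this]
        exact gen_pow_eq_one t
    · simp only [map_mul, map_inv, FreeGroup.lift_apply_of]
      rcases hFcase a with h1 | ⟨t, htT, hpret, hgent⟩
      · rw [h1]; group
      rcases hFcase b' with h1 | ⟨u, huT, hpreu, hgenu⟩
      · rw [h1]; group
      rw [hgent, hgenu]
      have hcomm : GraphProd.gen E p t * GraphProd.gen E p u
          = GraphProd.gen E p u * GraphProd.gen E p t := by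
        by_cases htu : t = u
        · rw [htu]
        by_cases hEtu : E t u
        · exact gen_comm hEtu
        · exact absurd hab (hedge t htT u huT hEtu a b'
            (fun i hi => (hpret i hi).symm) (fun i hi => (hpreu i hi).symm))
      rw [show GraphProd.gen E p t * GraphProd.gen E p u * (GraphProd.gen E p t)⁻¹ *
          (GraphProd.gen E p u)⁻¹ = ⁅GraphProd.gen E p t, GraphProd.gen E p u⁆ from rfl]
      exact commutatorElement_eq_one_iff_commute.2 hcomm
  set ψ : GraphProd E p →* GraphProd E p := PresentedGroup.toGroup hrels with hψ
  -- ψ kills KK N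
  have hker : KK E p N ≤ ψ.ker := by
    apply Subgroup.normalClosure_le_normal
    rintro x ⟨η, ν, hpre, rfl⟩
    rw [SetLike.mem_coe, MonoidHom.mem_ker, map_mul, map_inv]
    have h1 : ψ (GraphProd.gen E p η) = F η := PresentedGroup.toGroup.of hrels
    have h2 : ψ (GraphProd.gen E p ν) = F ν := PresentedGroup.toGroup.of hrels
    rw [h1, h2, hFpre η ν hpre, inv_mul_cancel]
  -- ψ fixes g
  have hfix : ψ g = g := by
    rw [← hw]
    have hc1 : ψ.comp (PresentedGroup.mk (graphProdRels E p)) = FreeGroup.lift F := by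
      apply FreeGroup.ext_hom
      intro a
      simp only [MonoidHom.comp_apply, FreeGroup.lift_apply_of]
      exact PresentedGroup.toGroup.of hrels
    have hc2 : (PresentedGroup.mk (graphProdRels E p) : FreeGroup (ℕ → ℕ) →* GraphProd E p)
        = FreeGroup.lift (fun v => GraphProd.gen E p v) := by
      apply FreeGroup.ext_hom
      intro a
      simp only [FreeGroup.lift_apply_of]
      rfl
    have : ψ (PresentedGroup.mk (graphProdRels E p) w) = FreeGroup.lift F w := by
      rw [← MonoidHom.comp_apply, hc1]
    rw [this, hc2]
    apply lift_letter_congr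
    intro v hv
    exact hFt v ((List.mem_toFinset).2 hv)
  exact ⟨N, fun hgK => by rw [← hfix]; exact hker hgK⟩

end Psi

/-- **Theorem 1.** Let `Γ = (ω^ω, E)` be a graph on the Baire space whose edge
relation is closed, and let `𝔭` be a coloring by prime powers or `∞` (encoded
as `0`) such that `𝔭(η)` depends only on `η(0)`.  Then `G = G(Γ, 𝔭)` admits a
left-invariant separable group ultrametric extending the standard metric of
the Baire space (in which distinct `η, ν` are at distance `2^{-(m+1)}`, `m`
being the length of their longest common initial segment). -/
theorem graphProd_baire_admits_leftInvariant_separable_ultrametric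
    (E : (ℕ → ℕ) → (ℕ → ℕ) → Prop) (hEsym : Symmetric E)
    (hEclosed : IsClosed {q : (ℕ → ℕ) × (ℕ → ℕ) | E q.1 q.2})
    (p : (ℕ → ℕ) → ℕ) (hp : ∀ η, p η ≠ 0 → IsPrimePow (p η))
    (hdep : ∀ η ν : ℕ → ℕ, η 0 = ν 0 → p η = p ν) :
    ∃ d : GraphProd E p → GraphProd E p → ℝ,
      -- `d` is a metric …
      (∀ g h, d g h = 0 ↔ g = h) ∧
      (∀ g h, d g h = d h g) ∧
      -- … which is an ultrametric …
      (∀ g h k, d g k ≤ max (d g h) (d h k)) ∧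
      -- … left-invariant …
      (∀ g h₁ h₂, d (g * h₁) (g * h₂) = d h₁ h₂) ∧
      -- … separable …
      (∃ D : Set (GraphProd E p), D.Countable ∧
        ∀ g : GraphProd E p, ∀ ε : ℝ, 0 < ε → ∃ x ∈ D, d g x < ε) ∧
      -- … and extends the standard metric of the Baire space.
      (∀ η ν : ℕ → ℕ, ∀ m : ℕ, (∀ i < m, η i = ν i) → η m ≠ ν m →
        d (GraphProd.gen E p η) (GraphProd.gen E p ν) = (2 : ℝ) ^ (-(m + 1 : ℤ))) := by
  classical
  set S : GraphProd E p → Set ℕ := fun g => {n | g ∈ KK E p n} with hS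
  have hSdc : ∀ (g : GraphProd E p) (m n : ℕ), m ≤ n → n ∈ S g → m ∈ S g :=
    fun g m n h hn => KK_antitone E p h hn
  have hSbdd : ∀ g : GraphProd E p, g ≠ 1 → BddAbove (S g) := by
    intro g hg
    obtain ⟨N, hN⟩ := exists_KK_vanish hEclosed hdep g
    refine ⟨N, fun n hn => ?_⟩
    by_contra hc
    push_neg at hc
    exact hg (hN (KK_antitone E p (le_of_lt hc) hn))
  set ρ : GraphProd E p → ℝ :=
    fun g => if g = 1 then 0 else (2:ℝ)^(-(((sSup (S g) : ℕ) : ℤ) + 1)) with hρ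
  have hρ_one : ρ 1 = 0 := if_pos rfl
  have hρ_ne : ∀ g, g ≠ 1 → ρ g = (2:ℝ)^(-(((sSup (S g) : ℕ) : ℤ) + 1)) := fun g hg => if_neg hg
  have hρ_nonneg : ∀ g, 0 ≤ ρ g := by
    intro g
    by_cases hg : g = 1
    · rw [hg, hρ_one]
    · rw [hρ_ne g hg]; exact le_of_lt (zpow_pos (by norm_num) _)
  have hρ_eq_zero : ∀ g, ρ g = 0 ↔ g = 1 := by
    intro g
    constructor
    · intro h
      by_contra hg
      rw [hρ_ne g hg] at h
      exact absurd h (ne_of_gt (zpow_pos (by norm_num) _))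
    · intro h; rw [h, hρ_one]
  have hSinv : ∀ g : GraphProd E p, S g⁻¹ = S g := by
    intro g; ext n; simp only [hS, Set.mem_setOf_eq, inv_mem_iff]
  have hρ_inv : ∀ g : GraphProd E p, ρ g⁻¹ = ρ g := by
    intro g
    by_cases hg : g = 1
    · rw [hg, inv_one]
    · rw [hρ_ne _ (by simp [hg]), hρ_ne _ hg, hSinv]
  have hρ_le : ∀ (g : GraphProd E p) (n : ℕ), g ≠ 1 → g ∈ KK E p n →
      ρ g ≤ (2:ℝ)^(-((n : ℤ) + 1)) := by
    intro g n hg hgK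
    rw [hρ_ne g hg]
    apply zpow_le_zpow_right₀ one_le_two
    have : (n : ℤ) ≤ ((sSup (S g) : ℕ) : ℤ) := by exact_mod_cast le_csSup (hSbdd g hg) hgK
    omega
  have hρ_half : ∀ g : GraphProd E p, g ≠ 1 → ρ g ≤ (2:ℝ)^(-(1:ℤ)) := by
    intro g hg
    rw [hρ_ne g hg]
    apply zpow_le_zpow_right₀ one_le_two
    have : (0:ℤ) ≤ ((sSup (S g) : ℕ) : ℤ) := Int.natCast_nonneg _
    omega
  have hρ_ultra : ∀ x y : GraphProd E p, ρ (x * y) ≤ max (ρ x) (ρ y) := by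
    intro x y
    by_cases hx : x = 1
    · rw [hx, one_mul]; exact le_max_right _ _
    by_cases hy : y = 1
    · rw [hy, mul_one]; exact le_max_left _ _
    by_cases hxy : x * y = 1
    · rw [hxy, hρ_one]; exact le_trans (hρ_nonneg x) (le_max_left _ _)
    by_cases hex : (S x).Nonempty
    · by_cases hey : (S y).Nonempty
      · have hmx := Nat.sSup_mem hex (hSbdd x hx)
        have hmy := Nat.sSup_mem hey (hSbdd y hy)
        have hxyK : x * y ∈ KK E p (min (sSup (S x)) (sSup (S y))) :=
          mul_mem (hSdc x _ _ (min_le_left _ _) hmx) (hSdc y _ _ (min_le_right _ _) hmy)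
        have h1 := hρ_le (x * y) _ hxy hxyK
        rcases le_total (sSup (S x)) (sSup (S y)) with hab | hab
        · rw [min_eq_left hab] at h1
          exact le_max_of_le_left (h1.trans_eq (hρ_ne x hx).symm)
        · rw [min_eq_right hab] at h1
          exact le_max_of_le_right (h1.trans_eq (hρ_ne y hy).symm)
      · have hSy : S y = ∅ := Set.not_nonempty_iff_eq_empty.mp hey
        refine le_max_of_le_right ?_
        rw [hρ_ne y hy, hSy, csSup_empty]
        exact le_trans (hρ_half _ hxy) (by norm_num)
    · have hSx : S x = ∅ := Set.not_nonempty_iff_eq_empty.mp hex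
      refine le_max_of_le_left ?_
      rw [hρ_ne x hx, hSx, csSup_empty]
      exact le_trans (hρ_half _ hxy) (by norm_num)
  refine ⟨fun g h => ρ (g⁻¹ * h), ?_, ?_, ?_, ?_, ?_, ?_⟩
  · intro g h
    rw [hρ_eq_zero, inv_mul_eq_one]
  · intro g h
    show ρ (g⁻¹ * h) = ρ (h⁻¹ * g)
    rw [← hρ_inv (g⁻¹ * h)]
    congr 1
    group
  · intro g h k
    show ρ (g⁻¹ * k) ≤ max (ρ (g⁻¹ * h)) (ρ (h⁻¹ * k))
    have : g⁻¹ * k = (g⁻¹ * h) * (h⁻¹ * k) := by group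
    rw [this]
    exact hρ_ultra _ _
  · intro g h₁ h₂
    show ρ ((g * h₁)⁻¹ * (g * h₂)) = ρ (h₁⁻¹ * h₂)
    congr 1
    group
  · -- separability
    set fD : FreeGroup ((n : ℕ) × (Fin n → ℕ)) →* GraphProd E p :=
      FreeGroup.lift (fun x => GraphProd.gen E p (extZ x.2)) with hfD
    set D : Set (GraphProd E p) := Set.range fD with hD
    have hcount : D.Countable := by
      have : Countable (FreeGroup ((n : ℕ) × (Fin n → ℕ))) :=
        FreeGroup.toWord_injective.countable
      exact Set.countable_range _
    refine ⟨D, hcount, ?_⟩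
    intro g ε hε
    obtain ⟨k, hk⟩ : ∃ k : ℕ, (1/2 : ℝ) ^ k < ε := exists_pow_lt_of_lt_one hε (by norm_num)
    have key : ∀ u : FreeGroup (ℕ → ℕ), ∃ x, x ∈ D ∧
        ((PresentedGroup.mk (graphProdRels E p) u : GraphProd E p) : GraphProd E p ⧸ KK E p k)
          = (x : GraphProd E p ⧸ KK E p k) := by
      intro u
      induction u using FreeGroup.induction_on with
      | C1 =>
        refine ⟨1, ⟨1, map_one fD⟩, ?_⟩
        rw [map_one]
      | of η =>
        refine ⟨GraphProd.gen E p (extZ (fun i : Fin k => η i.1)),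
          ⟨FreeGroup.of ⟨k, fun i : Fin k => η i.1⟩, FreeGroup.lift_apply_of⟩, ?_⟩
        have : ((GraphProd.gen E p η : GraphProd E p) : GraphProd E p ⧸ KK E p k)
            = ((GraphProd.gen E p (extZ (fun i : Fin k => η i.1)) : GraphProd E p) :
              GraphProd E p ⧸ KK E p k) := by
          rw [QuotientGroup.eq]
          exact mem_KK_of_prefix E p (fun i hi => (extZ_lt (fun j : Fin k => η j.1) i hi).symm)
        exact this
      | inv_of η ih =>
        obtain ⟨x, hxD, hx⟩ := ih
        refine ⟨x⁻¹, ?_, ?_⟩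
        · obtain ⟨u, hu⟩ := hxD
          exact ⟨u⁻¹, by rw [map_inv, hu]⟩
        · rw [map_inv, QuotientGroup.mk_inv, QuotientGroup.mk_inv, hx]
      | mul u v ihu ihv =>
        obtain ⟨x, hxD, hx⟩ := ihu
        obtain ⟨y, hyD, hy⟩ := ihv
        refine ⟨x * y, ?_, ?_⟩
        · obtain ⟨u', hu'⟩ := hxD
          obtain ⟨v', hv'⟩ := hyD
          exact ⟨u' * v', by rw [map_mul, hu', hv']⟩
        · rw [map_mul, QuotientGroup.mk_mul, QuotientGroup.mk_mul, hx, hy]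
    obtain ⟨w, hw⟩ := PresentedGroup.mk_surjective (graphProdRels E p) g
    obtain ⟨x, hxD, hx⟩ := key w
    rw [hw] at hx
    refine ⟨x, hxD, ?_⟩
    show ρ (g⁻¹ * x) < ε
    by_cases hgx : g⁻¹ * x = 1
    · rw [hgx, hρ_one]; exact hε
    · have hmem : g⁻¹ * x ∈ KK E p k := (QuotientGroup.eq).1 hx
      have h1 := hρ_le _ k hgx hmem
      have h2 : (2:ℝ)^(-((k:ℤ)+1)) < (1/2 : ℝ)^k := by
        have he : (1/2 : ℝ)^k = (2:ℝ)^(-(k:ℤ)) := by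
          rw [zpow_neg, zpow_natCast]
          rw [one_div, inv_pow]
        rw [he]
        apply zpow_lt_zpow_right₀ one_lt_two
        omega
      exact lt_of_le_of_lt h1 (lt_trans h2 hk)
  · -- extension of the Baire metric
    intro η ν m hpre hne
    show ρ ((GraphProd.gen E p η)⁻¹ * GraphProd.gen E p ν) = (2:ℝ) ^ (-(m + 1 : ℤ))
    set x : GraphProd E p := (GraphProd.gen E p η)⁻¹ * GraphProd.gen E p ν with hx
    have hxK : x ∈ KK E p m := mem_KK_of_prefix E p hpre
    have hxN : x ∉ KK E p (m+1) :=
      not_mem_KK E p m hp hdep (Nat.lt_succ_self m) hne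
    have hx1 : x ≠ 1 := fun h => hxN (h ▸ one_mem _)
    have hsup : sSup (S x) = m := by
      apply le_antisymm
      · apply csSup_le ⟨m, hxK⟩
        intro b hb
        by_contra hc
        push_neg at hc
        exact hxN (hSdc x (m+1) b hc hb)
      · exact le_csSup (hSbdd x hx1) hxK
    rw [hρ_ne x hx1, hsup]
end Phi
end

section
/- Let Γ = (V, E_Γ) be a graph and 𝔭 : V → {pⁿ : p prime, n ≥ 1} ∪ {∞} a coloring. If there is a metric on the vertex set V which induces a separable topology in which E_Γ is a closed subset of V × V, then the graph product G(Γ, 𝔭) embeds (via an injective group homomorphism) into a non-Archimedean Polish group. -/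
/-- `m` is a metric on `V` inducing a separable topology in which `E` is a
closed subset of `V × V`. -/
def SepClosedMetric {V : Type*} (m : MetricSpace V) (E : Set (V × V)) : Prop :=
  @TopologicalSpace.SeparableSpace V m.toUniformSpace.toTopologicalSpace ∧
  @IsClosed (V × V)
    (@instTopologicalSpaceProd V V m.toUniformSpace.toTopologicalSpace
      m.toUniformSpace.toTopologicalSpace) E

/-- `G` embeds, via an injective group homomorphism, into a Polish group. -/
def EmbedsInPolishGroup (G : Type*) [Group G] : Prop :=
  ∃ (H : Type) (gH : Group H) (tH : TopologicalSpace H),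
    @IsTopologicalGroup H tH gH ∧ @PolishSpace H tH ∧
    ∃ f : G →* H, Function.Injective f

/-- `G` embeds, via an injective group homomorphism, into a non-Archimedean
Polish group. -/
def EmbedsInNonArchPolishGroup (G : Type*) [Group G] : Prop :=
  ∃ (H : Type) (gH : Group H) (tH : TopologicalSpace H),
    @IsTopologicalGroup H tH gH ∧ @PolishSpace H tH ∧ @NonarchimedeanGroup H gH tH ∧
    ∃ f : G →* H, Function.Injective f



open Equiv

set_option synthInstance.maxHeartbeats 1000000
set_option maxHeartbeats 1000000

namespace PermNatTop

/-- The embedding of `Perm ℕ` into `(ℕ → ℕ) × (ℕ → ℕ)`. -/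
def ι (σ : Equiv.Perm ℕ) : (ℕ → ℕ) × (ℕ → ℕ) := (⇑σ, ⇑σ.symm)

lemma ι_injective : Function.Injective ι := by
  intro σ τ h
  ext n
  exact congrFun (congrArg Prod.fst h) n

/-- The permutation-group topology on `Perm ℕ`. -/
def tH : TopologicalSpace (Equiv.Perm ℕ) :=
  TopologicalSpace.induced ι inferInstance

lemma cont_eval (n : ℕ) :
    Continuous fun x : (ℕ → ℕ) × (ℕ → ℕ) => x.1 (x.2 n) := by
  rw [continuous_discrete_rng]
  intro m
  have : (fun x : (ℕ → ℕ) × (ℕ → ℕ) => x.1 (x.2 n)) ⁻¹' {m} =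
      ⋃ k : ℕ, {f : ℕ → ℕ | f k = m} ×ˢ {g : ℕ → ℕ | g n = k} := by
    ext ⟨f, g⟩
    simp only [Set.mem_preimage, Set.mem_singleton_iff, Set.mem_iUnion, Set.mem_prod,
      Set.mem_setOf_eq]
    constructor
    · intro h; exact ⟨g n, h, rfl⟩
    · rintro ⟨k, h1, h2⟩; rw [h2]; exact h1
  rw [this]
  refine isOpen_iUnion fun k => IsOpen.prod ?_ ?_
  · exact show IsOpen ((fun f : ℕ → ℕ => f k) ⁻¹' ({m} : Set ℕ)) from
      (isOpen_discrete _).preimage (continuous_apply k)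
  · exact show IsOpen ((fun g : ℕ → ℕ => g n) ⁻¹' ({k} : Set ℕ)) from
      (isOpen_discrete _).preimage (continuous_apply n)

lemma cont_eval' (n : ℕ) :
    Continuous fun x : (ℕ → ℕ) × (ℕ → ℕ) => x.2 (x.1 n) :=
  (cont_eval n).comp continuous_swap

lemma range_ι : Set.range ι =
    {x : (ℕ → ℕ) × (ℕ → ℕ) | ∀ n, x.1 (x.2 n) = n ∧ x.2 (x.1 n) = n} := by
  ext x
  constructor
  · rintro ⟨σ, rfl⟩ n
    exact ⟨σ.apply_symm_apply n, σ.symm_apply_apply n⟩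
  · intro h
    refine ⟨⟨x.1, x.2, fun n => (h n).2, fun n => (h n).1⟩, ?_⟩
    exact Prod.ext rfl rfl

lemma isClosed_range_ι : IsClosed (Set.range ι) := by
  rw [range_ι]
  have : {x : (ℕ → ℕ) × (ℕ → ℕ) | ∀ n, x.1 (x.2 n) = n ∧ x.2 (x.1 n) = n} =
      ⋂ n : ℕ, ({x : (ℕ → ℕ) × (ℕ → ℕ) | x.1 (x.2 n) = n} ∩
        {x : (ℕ → ℕ) × (ℕ → ℕ) | x.2 (x.1 n) = n}) := by
    ext x; simp [Set.mem_iInter, forall_and]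
  rw [this]
  refine isClosed_iInter fun n => IsClosed.inter ?_ ?_
  · exact isClosed_singleton.preimage (cont_eval n)
  · exact isClosed_singleton.preimage (cont_eval' n)

lemma polish : @PolishSpace (Equiv.Perm ℕ) tH := by
  letI := tH
  haveI h1 : PolishSpace (ℕ → ℕ) := inferInstance
  haveI h2 : PolishSpace ((ℕ → ℕ) × (ℕ → ℕ)) := inferInstance
  have hemb : Topology.IsClosedEmbedding ι :=
    Topology.IsClosedEmbedding.mk ⟨⟨rfl⟩, ι_injective⟩ isClosed_range_ι
  exact hemb.polishSpace

lemma topGroup : @IsTopologicalGroup (Equiv.Perm ℕ) tH _ := by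
  letI := tH
  refine { continuous_mul := ?_, continuous_inv := ?_ }
  · -- continuous mul
    apply continuous_induced_rng.mpr
    have hcι : @Continuous _ _ tH _ ι := continuous_induced_dom
    have h1 : Continuous fun q : Equiv.Perm ℕ × Equiv.Perm ℕ => (ι q.1, ι q.2) := by
      refine Continuous.prodMk ?_ ?_
      · exact hcι.comp continuous_fst
      · exact hcι.comp continuous_snd
    have key : Continuous fun y : ((ℕ → ℕ) × (ℕ → ℕ)) × ((ℕ → ℕ) × (ℕ → ℕ)) =>
        ((fun n => y.1.1 (y.2.1 n), fun n => y.2.2 (y.1.2 n)) : (ℕ → ℕ) × (ℕ → ℕ)) := by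
      refine Continuous.prodMk ?_ ?_
      · refine continuous_pi fun n => ?_
        exact (cont_eval n).comp
          ((continuous_fst.fst.prodMk continuous_snd.fst))
      · refine continuous_pi fun n => ?_
        exact (cont_eval n).comp
          ((continuous_snd.snd.prodMk continuous_fst.snd))
    have : (fun q : Equiv.Perm ℕ × Equiv.Perm ℕ => ι (q.1 * q.2)) =
        (fun y : ((ℕ → ℕ) × (ℕ → ℕ)) × ((ℕ → ℕ) × (ℕ → ℕ)) =>
          ((fun n => y.1.1 (y.2.1 n), fun n => y.2.2 (y.1.2 n)) : (ℕ → ℕ) × (ℕ → ℕ))) ∘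
          (fun q => (ι q.1, ι q.2)) := by
      funext q
      simp only [Function.comp_apply, ι]
      rfl
    show Continuous fun q : Equiv.Perm ℕ × Equiv.Perm ℕ => ι (q.1 * q.2)
    rw [this]
    exact key.comp h1
  · -- continuous inv
    apply continuous_induced_rng.mpr
    have : (fun σ : Equiv.Perm ℕ => ι σ⁻¹) = Prod.swap ∘ ι := by
      funext σ; rfl
    show Continuous fun σ : Equiv.Perm ℕ => ι σ⁻¹
    rw [this]
    exact continuous_swap.comp continuous_induced_dom

/-- The basic open subgroups: pointwise stabilizers of `{0, ..., n-1}`. -/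
def W (n : ℕ) : Subgroup (Equiv.Perm ℕ) where
  carrier := {σ | ∀ i < n, σ i = i ∧ σ.symm i = i}
  one_mem' := by intro i _; exact ⟨rfl, rfl⟩
  mul_mem' := by
    intro σ τ hσ hτ i hi
    constructor
    · show σ (τ i) = i
      rw [(hτ i hi).1, (hσ i hi).1]
    · show τ.symm (σ.symm i) = i
      rw [(hσ i hi).2, (hτ i hi).2]
  inv_mem' := by
    intro σ hσ i hi
    exact ⟨(hσ i hi).2, (hσ i hi).1⟩

lemma W_isOpen (n : ℕ) : @IsOpen _ tH (W n : Set (Equiv.Perm ℕ)) := by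
  letI := tH
  have : (W n : Set (Equiv.Perm ℕ)) =
      ι ⁻¹' (({f | ∀ i < n, f i = i} : Set (ℕ → ℕ)) ×ˢ ({g | ∀ i < n, g i = i} : Set (ℕ → ℕ))) := by
    ext σ
    simp only [Set.mem_preimage, Set.mem_prod, Set.mem_setOf_eq, ι]
    constructor
    · intro h; exact ⟨fun i hi => (h i hi).1, fun i hi => (h i hi).2⟩
    · intro h i hi; exact ⟨h.1 i hi, h.2 i hi⟩
  rw [this]
  have hopen : IsOpen ({f : ℕ → ℕ | ∀ i < n, f i = i}) := by
    have heq : {f : ℕ → ℕ | ∀ i < n, f i = i} =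
        ⋂ j : Fin n, (fun f : ℕ → ℕ => f j.1) ⁻¹' ({(j.1 : ℕ)} : Set ℕ) := by
      ext f
      simp only [Set.mem_iInter, Set.mem_preimage, Set.mem_singleton_iff, Set.mem_setOf_eq]
      exact ⟨fun h j => h j.1 j.2, fun h i hi => h ⟨i, hi⟩⟩
    rw [heq]
    exact isOpen_iInter_of_finite fun j =>
      (isOpen_discrete _).preimage (continuous_apply j.1)
  exact (hopen.prod hopen).preimage continuous_induced_dom

lemma nonarch : @NonarchimedeanGroup (Equiv.Perm ℕ) _ tH := by
  letI := tH
  haveI := topGroup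
  constructor
  intro U hU
  rw [show (nhds (1 : Equiv.Perm ℕ)) = Filter.comap ι (nhds (ι 1)) from nhds_induced ι 1] at hU
  rcases hU with ⟨S, hS, hSU⟩
  have hι1 : ι 1 = (id, id) := rfl
  rw [hι1, nhds_prod_eq] at hS
  rcases Filter.mem_prod_iff.mp hS with ⟨A, hA, B, hB, hAB⟩
  rw [nhds_pi] at hA hB
  rcases Filter.mem_pi.mp hA with ⟨I, hIfin, t, ht, htA⟩
  rcases Filter.mem_pi.mp hB with ⟨J, hJfin, u, hu, huB⟩
  -- choose n bounding I ∪ J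
  obtain ⟨n, hn⟩ : ∃ n : ℕ, ∀ i ∈ I ∪ J, i < n := by
    rcases (hIfin.union hJfin).bddAbove with ⟨b, hb⟩
    exact ⟨b + 1, fun i hi => Nat.lt_succ_of_le (hb hi)⟩
  refine ⟨⟨W n, W_isOpen n⟩, ?_⟩
  intro σ hσ
  apply hSU
  apply hAB
  have hid : ∀ i, i ∈ I ∪ J → (σ : ℕ → ℕ) i = i ∧ (σ.symm : ℕ → ℕ) i = i :=
    fun i hi => hσ i (hn i hi)
  constructor
  · apply htA
    intro i hi
    have h2 : (ι σ).1 i = i := (hid i (Or.inl hi)).1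
    have h3 : i ∈ t i := by
      have := ht i
      simpa [nhds_discrete, Filter.mem_pure] using this
    rw [h2]; exact h3
  · apply huB
    intro i hi
    have h2 : (ι σ).2 i = i := (hid i (Or.inr hi)).2
    have h3 : i ∈ u i := by
      have := hu i
      simpa [nhds_discrete, Filter.mem_pure] using this
    rw [h2]; exact h3

end PermNatTop


lemma embeds_perm {G : Type*} [Group G] {ι : Type*} [Countable ι]
    (C : ι → Type*) [∀ i, Group (C i)] [∀ i, Countable (C i)]
    (φ : ∀ i, G →* C i) (hsep : ∀ g : G, g ≠ 1 → ∃ i, φ i g ≠ 1) :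
    ∃ f : G →* Equiv.Perm ℕ, Function.Injective f := by
  classical
  let P : G →* Equiv.Perm (Σ i, C i) :=
    { toFun := fun g => Equiv.sigmaCongrRight fun i => Equiv.mulLeft ((φ i) g)
      map_one' := by
        ext ⟨i, x⟩ <;> simp
        exact heq_of_eq (show (φ i) 1 * x = x by simp)
      map_mul' := by
        intro g h
        ext ⟨i, x⟩ <;> simp [mul_assoc, Equiv.Perm.mul_apply]
        exact heq_of_eq (show (φ i) (g * h) * x = (φ i) g * ((φ i) h * x) by simp [mul_assoc]) }
  have hPinj : Function.Injective P := by
    rw [injective_iff_map_eq_one]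
    intro g hg
    by_contra hne
    obtain ⟨i, hi⟩ := hsep g hne
    apply hi
    have := congrArg (fun σ : Equiv.Perm (Σ i, C i) => σ ⟨i, 1⟩) hg
    simpa [P] using this
  obtain ⟨e, he⟩ := exists_injective_nat (Σ i, C i)
  refine ⟨(Equiv.Perm.viaEmbeddingHom ⟨e, he⟩).comp P, ?_⟩
  exact (Equiv.Perm.viaEmbeddingHom_injective ⟨e, he⟩).comp hPinj


namespace GPAux

instance freeGroupCountable {α : Type*} [Countable α] : Countable (FreeGroup α) := by
  classical
  exact FreeGroup.toWord_injective.countable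

/-- exponent used to map a vertex of order `pv` to a power of a generator of order `ci` -/
def expo (ci pv : ℕ) : ℕ := if pv = 0 then 1 else ci / Nat.gcd ci pv

lemma expo_dvd (ci pv : ℕ) (h : pv ≠ 0) : ci ∣ expo ci pv * pv := by
  rcases Nat.eq_zero_or_pos ci with hc | hc
  · subst hc; simp [expo, h]
  · rw [expo, if_neg h]
    obtain ⟨t, ht⟩ := Nat.gcd_dvd_right ci pv
    have : ci / Nat.gcd ci pv * pv = ci * t := by
      calc ci / Nat.gcd ci pv * pv
          = ci / Nat.gcd ci pv * (Nat.gcd ci pv * t) := by rw [← ht]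
        _ = ci / Nat.gcd ci pv * Nat.gcd ci pv * t := by ring
        _ = ci * t := by rw [Nat.div_mul_cancel (Nat.gcd_dvd_left ci pv)]
    rw [this]
    exact dvd_mul_right ci t

lemma expo_self (c : ℕ) : expo c c = 1 := by
  rcases Nat.eq_zero_or_pos c with hc | hc
  · subst hc; simp [expo]
  · rw [expo, if_neg hc.ne', Nat.gcd_self, Nat.div_self hc]

variable {V : Type} (E : V → V → Prop) (p : V → ℕ) [MetricSpace V]

/-- an index of a ball `B(d i, q/2)` containing `v`, if any. -/
noncomputable def iOf {k : ℕ} (d : Fin k → V) (q : ℚ) (v : V) : Option (Fin k) :=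
  if h : ∃ i, dist v (d i) < (q : ℝ) / 2 then some h.choose else none

lemma iOf_dist {k : ℕ} {d : Fin k → V} {q : ℚ} {v : V} {i : Fin k}
    (h : iOf d q v = some i) : dist v (d i) < (q : ℝ) / 2 := by
  rw [iOf] at h
  split_ifs at h with hex
  · have := hex.choose_spec
    rwa [Option.some_inj.mp h] at this

lemma iOf_eq_some {k : ℕ} {d : Fin k → V} {q : ℚ} {v : V} {i : Fin k}
    (h1 : dist v (d i) < (q : ℝ) / 2)
    (h2 : ∀ j, dist v (d j) < (q : ℝ) / 2 → j = i) : iOf d q v = some i := by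
  have hex : ∃ j, dist v (d j) < (q : ℝ) / 2 := ⟨i, h1⟩
  rw [iOf, dif_pos hex]
  exact congrArg some (h2 _ hex.choose_spec)

/-- the vertex map into the free group on the template. -/
noncomputable def psi {k : ℕ} (d : Fin k → V) (q : ℚ) (c : Fin k → ℕ) (v : V) :
    FreeGroup (Fin k) :=
  (iOf d q v).elim 1 (fun i => FreeGroup.of i ^ expo (c i) (p v))

lemma psi_none {k : ℕ} {d : Fin k → V} {q : ℚ} (c : Fin k → ℕ) {v : V}
    (h : iOf d q v = none) : psi p d q c v = 1 := by
  rw [psi, h]; rfl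

lemma psi_some {k : ℕ} {d : Fin k → V} {q : ℚ} (c : Fin k → ℕ) {v : V} {i : Fin k}
    (h : iOf d q v = some i) : psi p d q c v = FreeGroup.of i ^ expo (c i) (p v) := by
  rw [psi, h]; rfl

/-- the relation set of the countable target group attached to a datum. -/
def Rels {k : ℕ} (d : Fin k → V) (q : ℚ) (F : Fin k → Fin k → Bool) (c : Fin k → ℕ) :
    Set (FreeGroup (Fin k)) :=
  graphProdRels (fun i j => F i j = true) c ∪
    (FreeGroup.lift (psi p d q c)) '' graphProdRels E p

lemma relmk {α : Type*} (rels : Set (FreeGroup α)) {r : FreeGroup α} (hr : r ∈ rels) :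
    PresentedGroup.mk rels r = 1 := by
  have : r ∈ Subgroup.normalClosure rels := Subgroup.subset_normalClosure hr
  exact (QuotientGroup.eq_one_iff r).mpr this

/-- the homomorphism from the graph product to the countable target group. -/
noncomputable def phi {k : ℕ} (d : Fin k → V) (q : ℚ) (F : Fin k → Fin k → Bool)
    (c : Fin k → ℕ) : GraphProd E p →* PresentedGroup (Rels E p d q F c) :=
  PresentedGroup.toGroup (f := fun v => PresentedGroup.mk _ (psi p d q c v)) (by
    intro r hr
    have hcomp : FreeGroup.lift (fun v => PresentedGroup.mk (Rels E p d q F c) (psi p d q c v)) =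
        (PresentedGroup.mk (Rels E p d q F c)).comp (FreeGroup.lift (psi p d q c)) := by
      apply FreeGroup.ext_hom
      intro a
      simp
    rw [hcomp]
    exact relmk _ (Or.inr ⟨r, hr, rfl⟩))

lemma comm_of_rel {G : Type*} [Group G] {x y : G} (h : x * y * x⁻¹ * y⁻¹ = 1) :
    Commute x y := by
  have h1 : (x * y) * (y * x)⁻¹ = 1 := by
    rw [mul_inv_rev, ← mul_assoc]
    exact h
  exact mul_inv_eq_one.mp h1

lemma rel_of_comm {G : Type*} [Group G] {x y : G} (h : Commute x y) :
    x * y * x⁻¹ * y⁻¹ = 1 := by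
  have : x * y = y * x := h
  rw [this]
  simp [mul_assoc]

lemma pow_eq_one_of_dvd {G : Type*} [Group G] {x : G} {c m : ℕ} (h : x ^ c = 1)
    (hdvd : c ∣ m) : x ^ m = 1 := by
  obtain ⟨t, rfl⟩ := hdvd
  rw [pow_mul, h, one_pow]

/-- commutation of generator images in the graph product. -/
lemma graphProd_commute {a b : V} (hab : E a b) :
    Commute (PresentedGroup.mk (graphProdRels E p) (FreeGroup.of a))
      (PresentedGroup.mk (graphProdRels E p) (FreeGroup.of b)) := by
  apply comm_of_rel
  have := relmk (graphProdRels E p) (Or.inr ⟨a, b, hab, rfl⟩)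
  simpa using this

lemma graphProd_pow (a : V) :
    (PresentedGroup.mk (graphProdRels E p) (FreeGroup.of a)) ^ p a = 1 := by
  have := relmk (graphProdRels E p) (Or.inl ⟨a, rfl⟩ :
    FreeGroup.of a ^ p a ∈ graphProdRels E p)
  simpa using this

lemma phi_of {k : ℕ} (d : Fin k → V) (q : ℚ) (F : Fin k → Fin k → Bool)
    (c : Fin k → ℕ) (v : V) :
    phi E p d q F c (PresentedGroup.mk _ (FreeGroup.of v)) =
      PresentedGroup.mk _ (psi p d q c v) := by
  exact PresentedGroup.toGroup.of _


/-- The retraction from the template group back to the graph product, for a good datum. -/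
lemma theta_exists {k : ℕ} (s : Fin k → V) (d : Fin k → V) (q : ℚ)
    (c : Fin k → ℕ) (F : Fin k → Fin k → Bool)
    (hc : ∀ i, c i = p (s i))
    (hF : ∀ i j, F i j = true → E (s i) (s j))
    (hgeo : ∀ (a b : V) (i j : Fin k), iOf d q a = some i → iOf d q b = some j →
      E a b → i = j ∨ E (s i) (s j)) :
    ∃ θ : PresentedGroup (Rels E p d q F c) →* GraphProd E p,
      ∀ i, θ (PresentedGroup.mk _ (FreeGroup.of i)) =
        PresentedGroup.mk _ (FreeGroup.of (s i)) := by
  set G := GraphProd E p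
  set f : Fin k → G := fun i => PresentedGroup.mk (graphProdRels E p) (FreeGroup.of (s i))
    with hf
  have hX : ∀ i, (f i) ^ (c i) = 1 := by
    intro i
    rw [hf, hc i]
    exact graphProd_pow E p (s i)
  have hrels : ∀ r ∈ Rels E p d q F c, FreeGroup.lift f r = 1 := by
    intro r hr
    rcases hr with htemp | ⟨r₀, hr₀, rfl⟩
    · rcases htemp with ⟨i, rfl⟩ | ⟨i, j, hij, rfl⟩
      · rw [map_pow, FreeGroup.lift_apply_of]
        exact hX i
      · simp only [map_mul, map_inv, FreeGroup.lift_apply_of]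
        exact rel_of_comm (graphProd_commute E p (hF i j hij))
    · -- image relators
      rcases hr₀ with ⟨a, rfl⟩ | ⟨a, b, hab, rfl⟩
      · -- power relator
        rw [map_pow, FreeGroup.lift_apply_of]
        rcases hio : iOf d q a with _ | i
        · rw [psi_none p c hio]
          simp
        · rw [psi_some p c hio]
          simp only [map_pow, FreeGroup.lift_apply_of]
          rcases Nat.eq_zero_or_pos (p a) with hpa | hpa
          · rw [hpa, pow_zero]
          · rw [← pow_mul]
            exact pow_eq_one_of_dvd (hX i) (expo_dvd (c i) (p a) hpa.ne')
      · -- commutator relator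
        simp only [map_mul, map_inv, FreeGroup.lift_apply_of]
        apply rel_of_comm
        rcases hioa : iOf d q a with _ | i
        · rw [psi_none p c hioa]
          simp
        · rcases hiob : iOf d q b with _ | j
          · rw [psi_none p c hiob]
            simp
          · rw [psi_some p c hioa, psi_some p c hiob]
            simp only [map_pow, FreeGroup.lift_apply_of]
            rcases hgeo a b i j hioa hiob hab with rfl | hE
            · exact (Commute.refl (f i)).pow_pow _ _
            · exact (graphProd_commute E p hE).pow_pow _ _
  refine ⟨PresentedGroup.toGroup hrels, fun i => ?_⟩
  exact PresentedGroup.toGroup.of hrels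


lemma main_sep (hE : IsClosed {x : V × V | E x.1 x.2}) (D : Set V) (hD : Dense D)
    (g : GraphProd E p) (hg : g ≠ 1) :
    ∃ (k : ℕ) (d : Fin k → V) (F : Fin k → Fin k → Bool) (c : Fin k → ℕ) (q : ℚ),
      (∀ i, d i ∈ D) ∧ phi E p d q F c g ≠ 1 := by
  classical
  obtain ⟨w, rfl⟩ := PresentedGroup.mk_surjective (graphProdRels E p) g
  have hwne : w ≠ 1 := fun h => hg (by rw [h, map_one])
  have hLne : w.toWord ≠ [] := fun h => hwne (FreeGroup.toWord_eq_nil_iff.mp h)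
  set L := w.toWord with hL
  set S : Finset V := (L.map Prod.fst).toFinset with hS
  have hSne : S.Nonempty := by
    rcases hL' : L with _ | ⟨x, M⟩
    · exact absurd hL' hLne
    · exact ⟨x.1, by rw [hS, hL']; simp⟩
  set k := S.card with hk
  have hkpos : 0 < k := Finset.card_pos.mpr hSne
  haveI : Nonempty (Fin k) := ⟨⟨0, hkpos⟩⟩
  have e : ↥S ≃ Fin k := (Fintype.equivFin ↥S).trans (finCongr (Fintype.card_coe S))
  set s : Fin k → V := fun i => ((e.symm i : ↥S) : V) with hs
  have hs_inj : Function.Injective s := fun i j h =>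
    e.symm.injective (Subtype.coe_injective h)
  have hs_mem : ∀ v ∈ S, ∃ i, s i = v := fun v hv =>
    ⟨e ⟨v, hv⟩, by simp [hs]⟩
  -- the separation radii
  have hop : ∀ i j : Fin k, ¬ E (s i) (s j) → ∃ r : ℝ, 0 < r ∧
      ∀ a b : V, dist a (s i) < r → dist b (s j) < r → ¬ E a b := by
    intro i j hnE
    have hmem : ((s i, s j) : V × V) ∈ {x : V × V | E x.1 x.2}ᶜ := hnE
    obtain ⟨r, hr0, hball⟩ := Metric.isOpen_iff.mp hE.isOpen_compl _ hmem
    refine ⟨r, hr0, fun a b ha hb hab => ?_⟩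
    have hmem2 : ((a, b) : V × V) ∈ Metric.ball ((s i, s j) : V × V) r := by
      rw [Metric.mem_ball, Prod.dist_eq]
      exact max_lt ha hb
    exact hball hmem2 hab
  set f1 : Fin k × Fin k → ℝ := fun ij =>
    if hij : ij.1 = ij.2 then 1
    else if hE2 : E (s ij.1) (s ij.2) then dist (s ij.1) (s ij.2) / 4
    else min (dist (s ij.1) (s ij.2) / 4) (hop ij.1 ij.2 hE2).choose with hf1
  have hf1pos : ∀ ij : Fin k × Fin k, 0 < f1 ij := by
    intro ij
    rw [hf1]
    dsimp only
    have hdistpos : ij.1 ≠ ij.2 → 0 < dist (s ij.1) (s ij.2) / 4 := fun hij => by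
      have : s ij.1 ≠ s ij.2 := fun hc => hij (hs_inj hc)
      have := dist_pos.mpr this
      linarith
    split_ifs with h1 h2
    · exact one_pos
    · exact hdistpos h1
    · exact lt_min (hdistpos h1) (hop ij.1 ij.2 h2).choose_spec.1
  set ε : ℝ := Finset.univ.inf' (Finset.univ_nonempty) f1 with hε
  have hε0 : 0 < ε := by
    rw [hε, Finset.lt_inf'_iff]
    exact fun ij _ => hf1pos ij
  have hεA : ∀ i j : Fin k, i ≠ j → ε ≤ dist (s i) (s j) / 4 := by
    intro i j hij
    refine (Finset.inf'_le f1 (Finset.mem_univ (i, j))).trans ?_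
    rw [hf1]
    dsimp only
    rw [dif_neg hij]
    split_ifs
    · exact le_rfl
    · exact min_le_left _ _
  have hεB : ∀ (i j : Fin k), i ≠ j → ∀ (hnE : ¬ E (s i) (s j)),
      ε ≤ (hop i j hnE).choose := by
    intro i j hij hnE
    refine (Finset.inf'_le f1 (Finset.mem_univ (i, j))).trans ?_
    rw [hf1]
    dsimp only
    rw [dif_neg hij, dif_neg hnE]
    exact min_le_right _ _
  -- rational radius
  obtain ⟨q, hq0, hqε⟩ := exists_rat_btwn hε0
  -- centers in D
  have hDd : ∀ i : Fin k, ∃ x, x ∈ D ∧ dist (s i) x < (q : ℝ) / 2 := by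
    intro i
    obtain ⟨y, hy⟩ := Metric.dense_iff.mp hD (s i) ((q : ℝ) / 2) (by linarith)
    exact ⟨y, hy.2, by rw [dist_comm]; exact Metric.mem_ball.mp hy.1⟩
  choose d hdD hdd using hDd
  set F : Fin k → Fin k → Bool := fun i j => if E (s i) (s j) then true else false with hF
  set c : Fin k → ℕ := fun i => p (s i) with hc
  -- uniqueness of ball membership for the s i
  have huniq : ∀ i j : Fin k, dist (s i) (d j) < (q : ℝ) / 2 → j = i := by
    intro i j hdist
    by_contra hne
    have hij : i ≠ j := fun h => hne h.symm
    have h1 : dist (s i) (s j) ≤ dist (s i) (d j) + dist (d j) (s j) := dist_triangle _ _ _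
    have h2 : dist (d j) (s j) < (q : ℝ) / 2 := by rw [dist_comm]; exact hdd j
    have h3 : dist (s i) (s j) < (q : ℝ) := by linarith
    have h4 : ε ≤ dist (s i) (s j) / 4 := hεA i j hij
    have h5 : 0 < dist (s i) (s j) := dist_pos.mpr (fun hcc => hij (hs_inj hcc))
    linarith
  have hio_s : ∀ i : Fin k, iOf d q (s i) = some i := fun i =>
    iOf_eq_some (hdd i) (fun j hj => huniq i j hj)
  -- geometric commutation condition
  have hgeo : ∀ (a b : V) (i j : Fin k), iOf d q a = some i → iOf d q b = some j →
      E a b → i = j ∨ E (s i) (s j) := by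
    intro a b i j hioa hiob hab
    by_cases hij : i = j
    · exact Or.inl hij
    · refine Or.inr ?_
      by_contra hnE
      obtain ⟨hr0, hrprop⟩ := (hop i j hnE).choose_spec
      have hra : dist a (s i) < (hop i j hnE).choose := by
        have h1 : dist a (d i) < (q : ℝ) / 2 := iOf_dist hioa
        have h2 : dist (d i) (s i) < (q : ℝ) / 2 := by rw [dist_comm]; exact hdd i
        have h3 : dist a (s i) ≤ dist a (d i) + dist (d i) (s i) := dist_triangle _ _ _
        have h4 : ε ≤ (hop i j hnE).choose := hεB i j hij hnE
        linarith
      have hrb : dist b (s j) < (hop i j hnE).choose := by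
        have h1 : dist b (d j) < (q : ℝ) / 2 := iOf_dist hiob
        have h2 : dist (d j) (s j) < (q : ℝ) / 2 := by rw [dist_comm]; exact hdd j
        have h3 : dist b (s j) ≤ dist b (d j) + dist (d j) (s j) := dist_triangle _ _ _
        have h4 : ε ≤ (hop i j hnE).choose := hεB i j hij hnE
        linarith
      exact hrprop a b hra hrb hab
  have hFE : ∀ i j, F i j = true → E (s i) (s j) := by
    intro i j
    by_cases h : E (s i) (s j) <;> simp [hF, h]
  obtain ⟨θ, hθ⟩ := theta_exists E p s d q c F (fun i => rfl) hFE hgeo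
  refine ⟨k, d, F, c, q, hdD, ?_⟩
  intro hone
  -- the retraction computation
  have hsingle : ∀ v, v ∈ S →
      θ (phi E p d q F c (PresentedGroup.mk _ (FreeGroup.of v))) =
        PresentedGroup.mk _ (FreeGroup.of v) := by
    intro v hv
    obtain ⟨i, hi⟩ := hs_mem v hv
    rw [phi_of]
    have hio_v : iOf d q v = some i := hi ▸ hio_s i
    have hpsi : psi p d q c v = FreeGroup.of i ^ expo (c i) (p v) := psi_some p c hio_v
    have hexpo : expo (c i) (p v) = 1 := by
      have : c i = p v := by rw [hc]; dsimp only; rw [hi]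
      rw [this]
      exact expo_self _
    rw [hpsi, hexpo, pow_one, hθ i, hi]
  have key : ∀ M : List (V × Bool), (∀ x ∈ M, x.1 ∈ S) →
      θ (phi E p d q F c (PresentedGroup.mk _ (FreeGroup.mk M))) =
        PresentedGroup.mk _ (FreeGroup.mk M) := by
    intro M
    induction M with
    | nil =>
      intro _
      have h0 : FreeGroup.mk ([] : List (V × Bool)) = 1 := FreeGroup.one_eq_mk.symm
      rw [h0, map_one, map_one, map_one]
    | cons x M ih =>
      intro hmem
      have hx : x.1 ∈ S := hmem x (List.mem_cons_self)
      have hsplit : FreeGroup.mk (x :: M) = FreeGroup.mk [x] * FreeGroup.mk M := by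
        show FreeGroup.mk ([x] ++ M) = _
        rw [← FreeGroup.mul_mk]
      rw [hsplit, map_mul, map_mul, map_mul, ih (fun y hy => hmem y (List.mem_cons_of_mem _ hy))]
      congr 1
      obtain ⟨v, b⟩ := x
      have hv : v ∈ S := hx
      cases b
      · -- inverse letter
        have hneg : FreeGroup.mk [(v, false)] = (FreeGroup.of v)⁻¹ := by
          show _ = (FreeGroup.mk [(v, true)])⁻¹
          rw [FreeGroup.inv_mk]
          rfl
        rw [hneg, map_inv, map_inv, map_inv, hsingle v hv]
      · -- positive letter
        exact hsingle v hv
  have hfin := key L (by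
    intro x hx
    rw [hS]
    rw [List.mem_toFinset]
    exact List.mem_map.mpr ⟨x, hx, rfl⟩)
  rw [hL] at hfin
  rw [FreeGroup.mk_toWord] at hfin
  rw [hone, map_one] at hfin
  exact hg hfin.symm

end GPAux

instance presentedGroupCountable {α : Type*} [Countable α] (rels : Set (FreeGroup α)) :
    Countable (PresentedGroup rels) := by
  unfold PresentedGroup
  exact inferInstanceAs (Countable (Quotient (QuotientGroup.leftRel (Subgroup.normalClosure rels))))

/-- If there is a metric on the vertex set `V` inducing a separable topology in
which the edge relation `E_Γ` is closed, then the graph product `G(Γ, 𝔭)`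
embeds, via an injective group homomorphism, into a non-Archimedean Polish
group. -/
theorem graphProd_embedsInNonArchPolishGroup_of_sepClosedMetric
    {V : Type} (E : V → V → Prop) (hEsym : Symmetric E)
    (p : V → ℕ) (hp : ∀ v, p v ≠ 0 → IsPrimePow (p v))
    (h : ∃ m : MetricSpace V, SepClosedMetric m {q : V × V | E q.1 q.2}) :
    EmbedsInNonArchPolishGroup (GraphProd E p) := by
  classical
  obtain ⟨m, hsep, hclosed⟩ := h
  letI : MetricSpace V := m
  haveI : TopologicalSpace.SeparableSpace V := hsep
  obtain ⟨D, hDc, hDd⟩ := TopologicalSpace.exists_countable_dense V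
  haveI : Countable ↥D := hDc.to_subtype
  let ι : Type := Σ k : ℕ, (Fin k → ↥D) × (Fin k → Fin k → Bool) × (Fin k → ℕ) × ℚ
  haveI : Countable ι := inferInstance
  let C : ι → Type := fun δ =>
    PresentedGroup (GPAux.Rels E p (fun i => ((δ.2.1 i : V))) δ.2.2.2.2 δ.2.2.1 δ.2.2.2.1)
  let φ : ∀ δ : ι, GraphProd E p →* C δ := fun δ =>
    GPAux.phi E p (fun i => ((δ.2.1 i : V))) δ.2.2.2.2 δ.2.2.1 δ.2.2.2.1
  have hclosed' : IsClosed {x : V × V | E x.1 x.2} := hclosed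
  have hsep' : ∀ g : GraphProd E p, g ≠ 1 → ∃ δ : ι, φ δ g ≠ 1 := by
    intro g hg
    obtain ⟨k, d, F, c, q, hdD, hne⟩ := GPAux.main_sep E p hclosed' D hDd g hg
    exact ⟨⟨k, fun i => ⟨d i, hdD i⟩, F, c, q⟩, hne⟩
  obtain ⟨f, hf⟩ := embeds_perm C φ hsep'
  exact ⟨Equiv.Perm ℕ, inferInstance, PermNatTop.tH, PermNatTop.topGroup,
    PermNatTop.polish, PermNatTop.nonarch, f, hf⟩
end

section
/- Let Γ = (V, E_Γ) be a graph and 𝔭 : V → ω a graph colouring. Suppose that V admits a metric d inducing a separable topology in which E_Γ is a closed subset of V × V. Then V admits an ultrametric d′ inducing a separable topology in which E_Γ is closed. -/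
/-- **Lemma (part 1).** Let `Γ = (V, E_Γ)` be a graph and `𝔭 : V → ω` a graph
colouring.  If `V` admits a metric `d` inducing a separable topology in which
`E_Γ` is closed, then `V` admits an ultrametric `d′` with the same
properties. -/
theorem exists_ultrametric_sepClosed_of_sepClosedMetric
    {V : Type} (E : V → V → Prop) (hEsym : Symmetric E) (p : V → ℕ)
    (h : ∃ m : MetricSpace V, SepClosedMetric m {q : V × V | E q.1 q.2}) :
    ∃ m' : MetricSpace V,
      (∀ x y z : V, m'.dist x z ≤ max (m'.dist x y) (m'.dist y z)) ∧
      SepClosedMetric m' {q : V × V | E q.1 q.2} := by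
  classical
  obtain ⟨m, hsep, hclosed⟩ := h
  letI := m
  haveI : TopologicalSpace.SeparableSpace V := hsep
  haveI : SecondCountableTopology V := UniformSpace.secondCountable_of_separable V
  obtain ⟨b, hbc, -, hb⟩ := TopologicalSpace.exists_countable_basis V
  obtain ⟨B, hB⟩ := (hbc.insert ∅).exists_eq_range (Set.insert_nonempty _ _)
  set φ : V → (ℕ → Bool) := fun x n => decide (x ∈ B n) with hφdef
  have hφ : Function.Injective φ := by
    intro x y hxy
    by_contra hne
    obtain ⟨s, hsb, hxs, hsy⟩ := hb.exists_subset_of_mem_open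
      (show x ∈ ({y}ᶜ : Set V) from hne) isOpen_compl_singleton
    have : s ∈ Set.range B := by rw [← hB]; exact Set.mem_insert_of_mem _ hsb
    obtain ⟨n, rfl⟩ := this
    have h1 : φ x n = true := by simp [hφdef, hxs]
    have h2 : φ y n = false := by
      simp [hφdef]; exact fun hy => hsy hy rfl
    rw [hxy] at h1; rw [h1] at h2; exact Bool.noConfusion h2
  letI mC : MetricSpace (ℕ → Bool) := PiNat.metricSpace
  have htop : (MetricSpace.induced φ hφ mC).toUniformSpace.toTopologicalSpace =
      TopologicalSpace.induced φ mC.toUniformSpace.toTopologicalSpace :=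
    UniformSpace.toTopologicalSpace_comap
  have hle : TopologicalSpace.induced φ mC.toUniformSpace.toTopologicalSpace ≤
      m.toUniformSpace.toTopologicalSpace := by
    rw [← isOpen_implies_isOpen_iff]
    intro U hU
    obtain ⟨S, hSb, rfl⟩ := hb.open_eq_sUnion hU
    refine @isOpen_sUnion V (TopologicalSpace.induced φ _) S fun s hs => ?_
    have : s ∈ Set.range B := by rw [← hB]; exact Set.mem_insert_of_mem _ (hSb hs)
    obtain ⟨n, rfl⟩ := this
    have heq : B n = φ ⁻¹' {f : ℕ → Bool | f n = true} := by
      ext x; simp [hφdef]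
    rw [heq]
    refine isOpen_induced ?_
    have : IsOpen ((fun f : ℕ → Bool => f n) ⁻¹' {true}) :=
      (isOpen_discrete {true}).preimage (continuous_apply n)
    exact this
  refine ⟨MetricSpace.induced φ hφ mC, ?_, ?_, ?_⟩
  · intro x y z
    exact PiNat.dist_triangle_nonarch (φ x) (φ y) (φ z)
  · rw [show (MetricSpace.induced φ hφ mC).toUniformSpace.toTopologicalSpace =
        TopologicalSpace.induced φ mC.toUniformSpace.toTopologicalSpace from htop]
    haveI := TopologicalSpace.secondCountableTopology_induced V (ℕ → Bool) φ
      (t := mC.toUniformSpace.toTopologicalSpace)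
    exact @TopologicalSpace.SecondCountableTopology.to_separableSpace V
      (TopologicalSpace.induced φ mC.toUniformSpace.toTopologicalSpace) ‹_›
  · refine IsClosed.mono hclosed ?_
    rw [htop]
    exact inf_le_inf (induced_mono hle) (induced_mono hle)
end

section
/- Let Γ = (ω^ω, E) be a graph on the Baire space with E closed, 𝔭 a coloring with 𝔭(η) depending only on η(0), G = G(Γ, 𝔭), and let d be the left-invariant ultrametric on G given by d(g, h) = 2^{−n(g^{−1}h)} for g ≠ h (where n(x) is the least 0 < n < ω with π_n(x) ≠ e) and d(g, g) = 0. Then the metric space (G, d) is separable, i.e., it has a countable dense subset. -/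
/-- The restriction `η ↾ n ∈ ω^n` of `η ∈ ω^ω`. -/
def res (n : ℕ) (η : ℕ → ℕ) : Fin n → ℕ := fun i => η i

/-- The edge relation `E_n` on `ω^n`: two sequences are adjacent iff they have
`E`-adjacent extensions in the Baire space. -/
def En (E : (ℕ → ℕ) → (ℕ → ℕ) → Prop) (n : ℕ) : (Fin n → ℕ) → (Fin n → ℕ) → Prop :=
  fun η ν => ∃ η' ν' : ℕ → ℕ, E η' ν' ∧ res n η' = η ∧ res n ν' = ν

/-- The coloring `𝔭_n` on `ω^n`, given by `𝔭_n(η) = 𝔭(η')` for an extension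
`η'` of `η` (well defined for `n ≥ 1` when `𝔭(η)` depends only on `η(0)`). -/
def pn (p : (ℕ → ℕ) → ℕ) (n : ℕ) : (Fin n → ℕ) → ℕ :=
  fun η => p fun k => if h : k < n then η ⟨k, h⟩ else 0

/-- Two homomorphisms out of a free group agree on a word provided they agree on
all letters occurring in it. -/
private lemma freeGroup_hom_eq_on_letters {α H : Type*} [Group H]
    (φ ψ : FreeGroup α →* H) (L : List (α × Bool))
    (h : ∀ x ∈ L, φ (FreeGroup.of x.1) = ψ (FreeGroup.of x.1)) :
    φ (FreeGroup.mk L) = ψ (FreeGroup.mk L) := by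
  induction L with
  | nil =>
    have h1 : FreeGroup.mk ([] : List (α × Bool)) = 1 := rfl
    rw [h1, map_one, map_one]
  | cons x L ih =>
    have hx : FreeGroup.mk (x :: L) = FreeGroup.mk [x] * FreeGroup.mk L := by
      rw [FreeGroup.mul_mk]
      rfl
    rw [hx, map_mul, map_mul, ih (fun y hy => h y (List.mem_cons_of_mem x hy))]
    congr 1
    rcases x with ⟨a, b⟩
    have ha := h (a, b) List.mem_cons_self
    cases b
    · have hinv : FreeGroup.mk [(a, false)] = (FreeGroup.of a)⁻¹ :=
        (FreeGroup.inv_mk (L := [(a, true)])).symm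
      rw [hinv, map_inv, map_inv, ha]
    · exact ha

/-- Key separation lemma: every nontrivial element of `G(Γ, 𝔭)` survives in some
finite-level quotient `G_m`. -/
private lemma exists_level
    (E : (ℕ → ℕ) → (ℕ → ℕ) → Prop)
    (hEclosed : IsClosed {q : (ℕ → ℕ) × (ℕ → ℕ) | E q.1 q.2})
    (p : (ℕ → ℕ) → ℕ)
    (hdep : ∀ η ν : ℕ → ℕ, η 0 = ν 0 → p η = p ν)
    (π : ∀ n : ℕ, GraphProd E p →* GraphProd (En E n) (pn p n))
    (hπ : ∀ n : ℕ, 0 < n → ∀ η : ℕ → ℕ,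
      π n (GraphProd.gen E p η) = GraphProd.gen (En E n) (pn p n) (res n η))
    (u : FreeGroup (ℕ → ℕ))
    (hu : PresentedGroup.mk (graphProdRels E p) u ≠ 1) :
    ∃ m : ℕ, 0 < m ∧ π m (PresentedGroup.mk (graphProdRels E p) u) ≠ 1 := by
  classical
  set S : Set (ℕ → ℕ) := {a | ∃ b, (a, b) ∈ u.toWord} with hS
  have hSfin : S.Finite := by
    apply (u.toWord.finite_toSet.image Prod.fst).subset
    rintro a ⟨b, hb⟩
    exact ⟨(a, b), hb, rfl⟩
  -- for each pair of sequences, a level beyond which restriction is faithful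
  have key : ∀ η ν : ℕ → ℕ, ∃ N, ∀ m, N ≤ m →
      (η ≠ ν → res m η ≠ res m ν) ∧
      (¬ E η ν → η ≠ ν → ¬ En E m (res m η) (res m ν)) := by
    intro η ν
    by_cases hne : η = ν
    · exact ⟨0, fun m _ => ⟨fun h => absurd hne h, fun _ h => absurd hne h⟩⟩
    obtain ⟨k, hk⟩ : ∃ k, η k ≠ ν k := by
      by_contra h
      push_neg at h
      exact hne (funext h)
    have inj : ∀ m, k < m → res m η ≠ res m ν := by
      intro m hkm heq
      exact hk (congrFun heq ⟨k, hkm⟩)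
    by_cases hE : E η ν
    · exact ⟨k + 1, fun m hm =>
        ⟨fun _ => inj m (Nat.lt_of_lt_of_le (Nat.lt_succ_self k) hm),
         fun hnE _ => absurd hE hnE⟩⟩
    have hEn : ∃ N, ∀ m, N ≤ m → ¬ En E m (res m η) (res m ν) := by
      by_contra hcon
      push_neg at hcon
      have hall : ∀ j : ℕ, ∃ η' ν' : ℕ → ℕ, E η' ν' ∧
          (∀ i < j, η' i = η i) ∧ (∀ i < j, ν' i = ν i) := by
        intro j
        obtain ⟨m, hjm, η', ν', hE', hres1, hres2⟩ := hcon j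
        exact ⟨η', ν', hE',
          fun i hij => congrFun hres1 ⟨i, lt_of_lt_of_le hij hjm⟩,
          fun i hij => congrFun hres2 ⟨i, lt_of_lt_of_le hij hjm⟩⟩
      choose f g hEfg hf hg using hall
      have t1 : Filter.Tendsto f Filter.atTop (nhds η) := by
        rw [tendsto_pi_nhds]
        intro i
        apply Filter.Tendsto.congr' _ (tendsto_const_nhds (x := η i))
        filter_upwards [Filter.eventually_ge_atTop (i + 1)] with j hj
        exact (hf j i (Nat.lt_of_lt_of_le (Nat.lt_succ_self i) hj)).symm
      have t2 : Filter.Tendsto g Filter.atTop (nhds ν) := by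
        rw [tendsto_pi_nhds]
        intro i
        apply Filter.Tendsto.congr' _ (tendsto_const_nhds (x := ν i))
        filter_upwards [Filter.eventually_ge_atTop (i + 1)] with j hj
        exact (hg j i (Nat.lt_of_lt_of_le (Nat.lt_succ_self i) hj)).symm
      have : (η, ν) ∈ {q : (ℕ → ℕ) × (ℕ → ℕ) | E q.1 q.2} :=
        hEclosed.mem_of_tendsto (t1.prodMk_nhds t2)
          (Filter.Eventually.of_forall fun j => hEfg j)
      exact hE this
    obtain ⟨N, hN⟩ := hEn
    exact ⟨max (k + 1) N, fun m hm =>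
      ⟨fun _ => inj m (Nat.lt_of_lt_of_le (Nat.lt_succ_self k)
          (le_trans (le_max_left _ _) hm)),
       fun _ _ => hN m (le_trans (le_max_right _ _) hm)⟩⟩
  choose Nf hNf using key
  set T := hSfin.toFinset with hT
  set m : ℕ := max 1 ((T ×ˢ T).sup fun q => Nf q.1 q.2) with hmdef
  have hm1 : 0 < m := lt_of_lt_of_le one_pos (le_max_left _ _)
  have hmN : ∀ η ∈ S, ∀ ν ∈ S, Nf η ν ≤ m := by
    intro η hη ν hν
    refine le_trans ?_ (le_max_right _ _)
    exact Finset.le_sup (f := fun q : (ℕ → ℕ) × (ℕ → ℕ) => Nf q.1 q.2)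
      (b := (η, ν))
      (Finset.mem_product.2 ⟨hSfin.mem_toFinset.2 hη, hSfin.mem_toFinset.2 hν⟩)
  -- the retraction data
  set f : (Fin m → ℕ) → GraphProd E p := fun a =>
    if h : ∃ η, η ∈ S ∧ res m η = a then GraphProd.gen E p h.choose else 1 with hfdef
  have hfpos : ∀ (a : Fin m → ℕ) (h : ∃ η, η ∈ S ∧ res m η = a),
      f a = GraphProd.gen E p h.choose := fun a h => dif_pos h
  have hfneg : ∀ a : Fin m → ℕ, (¬ ∃ η, η ∈ S ∧ res m η = a) → f a = 1 :=
    fun a h => dif_neg h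
  have hfS : ∀ η ∈ S, f (res m η) = GraphProd.gen E p η := by
    intro η hη
    have h : ∃ η', η' ∈ S ∧ res m η' = res m η := ⟨η, hη, rfl⟩
    rw [hfpos _ h]
    obtain ⟨hc1, hc2⟩ := h.choose_spec
    have : h.choose = η := by
      by_contra hne
      exact (hNf h.choose η m (hmN _ hc1 _ hη)).1 hne hc2
    rw [this]
  have relOne : ∀ r ∈ graphProdRels E p,
      PresentedGroup.mk (graphProdRels E p) r = 1 := fun r hr =>
    (QuotientGroup.eq_one_iff r).2 (Subgroup.subset_normalClosure hr)
  have hrel : ∀ r ∈ graphProdRels (En E m) (pn p m), FreeGroup.lift f r = 1 := by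
    rintro r (⟨a, rfl⟩ | ⟨a, b, hab, rfl⟩)
    · rw [map_pow, FreeGroup.lift_apply_of]
      by_cases h : ∃ η, η ∈ S ∧ res m η = a
      · rw [hfpos a h]
        obtain ⟨hη₀S, hη₀r⟩ := h.choose_spec
        have h0 : (fun k => if hk : k < m then a ⟨k, hk⟩ else 0) 0 = h.choose 0 := by
          show (if hk : (0 : ℕ) < m then a ⟨0, hk⟩ else 0) = h.choose 0
          rw [dif_pos hm1]
          exact (congrFun hη₀r ⟨0, hm1⟩).symm
        have hpn : pn p m a = p h.choose := hdep _ _ h0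
        rw [hpn]
        have hgen : GraphProd.gen E p h.choose ^ p h.choose =
            PresentedGroup.mk (graphProdRels E p) (FreeGroup.of h.choose ^ p h.choose) := by
          rw [map_pow]
          rfl
        rw [hgen]
        exact relOne _ (Or.inl ⟨h.choose, rfl⟩)
      · rw [hfneg a h, one_pow]
    · simp only [map_mul, map_inv, FreeGroup.lift_apply_of]
      by_cases ha : ∃ η, η ∈ S ∧ res m η = a
      · by_cases hb : ∃ η, η ∈ S ∧ res m η = b
        · rw [hfpos a ha, hfpos b hb]
          obtain ⟨haS, har⟩ := ha.choose_spec
          obtain ⟨hbS, hbr⟩ := hb.choose_spec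
          have hEn' : En E m (res m ha.choose) (res m hb.choose) := by
            rw [har, hbr]; exact hab
          have hcases : E ha.choose hb.choose ∨ ha.choose = hb.choose := by
            by_contra hcon
            push_neg at hcon
            exact (hNf _ _ m (hmN _ haS _ hbS)).2 hcon.1 hcon.2 hEn'
          rcases hcases with hE | heq
          · have h1 : PresentedGroup.mk (graphProdRels E p)
                (FreeGroup.of ha.choose * FreeGroup.of hb.choose *
                  (FreeGroup.of ha.choose)⁻¹ * (FreeGroup.of hb.choose)⁻¹) = 1 :=
              relOne _ (Or.inr ⟨_, _, hE, rfl⟩)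
            simp only [map_mul, map_inv] at h1
            exact h1
          · rw [heq]; group
        · rw [hfneg b hb]; group
      · rw [hfneg a ha]; group
  set ψ : GraphProd (En E m) (pn p m) →* GraphProd E p := PresentedGroup.toGroup hrel
    with hψdef
  have hψ : ∀ a ∈ S, ψ (π m (GraphProd.gen E p a)) = GraphProd.gen E p a := by
    intro a ha
    rw [hπ m hm1 a]
    exact (PresentedGroup.toGroup.of (h := hrel) (x := res m a)).trans (hfS a ha)
  have hlet : ∀ x ∈ u.toWord,
      (ψ.comp ((π m).comp (PresentedGroup.mk (graphProdRels E p)))) (FreeGroup.of x.1) =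
        (PresentedGroup.mk (graphProdRels E p)) (FreeGroup.of x.1) := by
    intro x hx
    exact hψ x.1 ⟨x.2, hx⟩
  have key2 := freeGroup_hom_eq_on_letters
    (ψ.comp ((π m).comp (PresentedGroup.mk (graphProdRels E p))))
    (PresentedGroup.mk (graphProdRels E p)) u.toWord hlet
  rw [FreeGroup.mk_toWord] at key2
  have main : ψ (π m (PresentedGroup.mk (graphProdRels E p) u)) =
      PresentedGroup.mk (graphProdRels E p) u := key2
  refine ⟨m, hm1, fun hcon => hu ?_⟩
  rw [← main, hcon, map_one]

/-- **Lemma (separability).** Let `Γ = (ω^ω, E)` be a graph on the Baire space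
with closed edge relation, `𝔭` a coloring by prime powers or `∞` (encoded as
`0`) depending only on `η(0)`, `G = G(Γ, 𝔭)`, `π n : G →* G_n` the restriction
homomorphisms, and `d : G → ℝ` the ultranorm with `d(e) = 0` and
`d(g) = 2^{-n(g)}` for `n(g)` the least `0 < n` with `π n g ≠ e`, inducing the
left-invariant ultrametric `(g, h) ↦ d(g⁻¹h)`.  Then `(G, d)` is separable:
it has a countable dense subset. -/
theorem separable_of_restriction_ultrametric
    (E : (ℕ → ℕ) → (ℕ → ℕ) → Prop) (hEsym : Symmetric E)
    (hEclosed : IsClosed {q : (ℕ → ℕ) × (ℕ → ℕ) | E q.1 q.2})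
    (p : (ℕ → ℕ) → ℕ) (hp : ∀ η, p η ≠ 0 → IsPrimePow (p η))
    (hdep : ∀ η ν : ℕ → ℕ, η 0 = ν 0 → p η = p ν)
    (π : ∀ n : ℕ, GraphProd E p →* GraphProd (En E n) (pn p n))
    (hπ : ∀ n : ℕ, 0 < n → ∀ η : ℕ → ℕ,
      π n (GraphProd.gen E p η) = GraphProd.gen (En E n) (pn p n) (res n η))
    (d : GraphProd E p → ℝ)
    (hd1 : d 1 = 0)
    (hdval : ∀ (g : GraphProd E p) (n : ℕ), 0 < n → π n g ≠ 1 →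
      (∀ m : ℕ, 0 < m → m < n → π m g = 1) → d g = (2 : ℝ) ^ (-(n : ℤ))) :
    ∃ D : Set (GraphProd E p), D.Countable ∧
      ∀ g : GraphProd E p, ∀ ε : ℝ, 0 < ε → ∃ x ∈ D, d (g⁻¹ * x) < ε := by
  classical
  haveI : Countable (FreeGroup (ℕ →₀ ℕ)) := FreeGroup.toWord_injective.countable
  refine ⟨Set.range (fun w0 : FreeGroup (ℕ →₀ ℕ) =>
      PresentedGroup.mk (graphProdRels E p)
        (FreeGroup.map (fun q : ℕ →₀ ℕ => (q : ℕ → ℕ)) w0)),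
    Set.countable_range _, ?_⟩
  intro g ε hε
  obtain ⟨n, hn⟩ : ∃ n : ℕ, ((1 : ℝ) / 2) ^ n < ε :=
    exists_pow_lt_of_lt_one hε (by norm_num)
  obtain ⟨w, hw⟩ := PresentedGroup.mk_surjective (graphProdRels E p) g
  set tr : (ℕ → ℕ) → (ℕ → ℕ) := fun η k => if k < n then η k else 0 with htr
  set x := PresentedGroup.mk (graphProdRels E p) (FreeGroup.map tr w) with hx
  have htrsupp : ∀ η : ℕ → ℕ, ∀ k, tr η k ≠ 0 → k ∈ Finset.range n := by
    intro η k hk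
    rw [Finset.mem_range]
    by_contra hkn
    apply hk
    simp [htr, hkn]
  set trF : (ℕ → ℕ) → (ℕ →₀ ℕ) := fun η =>
    Finsupp.onFinset (Finset.range n) (tr η) (htrsupp η) with htrF
  have hcoe : ∀ η, ((trF η : ℕ →₀ ℕ) : ℕ → ℕ) = tr η := by
    intro η
    funext k
    simp [htrF, Finsupp.onFinset_apply]
  have hxD : x ∈ Set.range (fun w0 : FreeGroup (ℕ →₀ ℕ) =>
      PresentedGroup.mk (graphProdRels E p)
        (FreeGroup.map (fun q : ℕ →₀ ℕ => (q : ℕ → ℕ)) w0)) := by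
    refine ⟨FreeGroup.map trF w, ?_⟩
    show PresentedGroup.mk (graphProdRels E p)
        (FreeGroup.map _ (FreeGroup.map trF w)) = x
    rw [FreeGroup.map.comp, hx]
    have hcomp : (fun q : ℕ →₀ ℕ => (q : ℕ → ℕ)) ∘ trF = tr := funext hcoe
    rw [hcomp]
  have hres : ∀ m : ℕ, m ≤ n → ∀ η, res m (tr η) = res m η := by
    intro m hmn η
    funext i
    show (if (i : ℕ) < n then η i else 0) = η i
    rw [if_pos (lt_of_lt_of_le i.2 hmn)]
  have heq : ∀ m, 0 < m → m ≤ n → π m x = π m g := by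
    intro m hm hmn
    rw [hx, ← hw]
    have hcomp : ((π m).comp (PresentedGroup.mk (graphProdRels E p))).comp
        (FreeGroup.map tr) = (π m).comp (PresentedGroup.mk (graphProdRels E p)) := by
      apply FreeGroup.ext_hom
      intro a
      show π m (PresentedGroup.mk (graphProdRels E p) (FreeGroup.of (tr a))) =
        π m (PresentedGroup.mk (graphProdRels E p) (FreeGroup.of a))
      have h1 : PresentedGroup.mk (graphProdRels E p) (FreeGroup.of (tr a)) =
          GraphProd.gen E p (tr a) := rfl
      have h2 : PresentedGroup.mk (graphProdRels E p) (FreeGroup.of a) =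
          GraphProd.gen E p a := rfl
      rw [h1, h2, hπ m hm, hπ m hm, hres m hmn a]
    exact DFunLike.congr_fun hcomp w
  refine ⟨x, hxD, ?_⟩
  by_cases hy : g⁻¹ * x = 1
  · rw [hy, hd1]; exact hε
  · have hyu : g⁻¹ * x =
        PresentedGroup.mk (graphProdRels E p) (w⁻¹ * FreeGroup.map tr w) := by
      rw [map_mul, map_inv, hw]
    obtain ⟨m0, hm0, hm0ne⟩ := exists_level E hEclosed p hdep π hπ
      (w⁻¹ * FreeGroup.map tr w) (by rw [← hyu]; exact hy)
    have hPex : ∃ m, 0 < m ∧ π m (g⁻¹ * x) ≠ 1 :=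
      ⟨m0, hm0, by rw [hyu]; exact hm0ne⟩
    set m := Nat.find hPex with hmdef
    obtain ⟨hmpos, hmne⟩ := Nat.find_spec hPex
    have hmin : ∀ j, 0 < j → j < m → π j (g⁻¹ * x) = 1 := by
      intro j hj hjm
      by_contra hc
      exact Nat.find_min hPex hjm ⟨hj, hc⟩
    have hdv := hdval (g⁻¹ * x) m hmpos hmne hmin
    have hmn : n < m := by
      by_contra hle
      push_neg at hle
      apply hmne
      rw [map_mul, map_inv, heq m hmpos hle]
      exact inv_mul_cancel _
    rw [hdv]
    have h2 : (2 : ℝ) ^ (-(m : ℤ)) = ((1 : ℝ) / 2) ^ m := by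
      rw [one_div, inv_pow, ← zpow_natCast (2 : ℝ) m, ← zpow_neg]
    rw [h2]
    calc ((1 : ℝ) / 2) ^ m ≤ ((1 : ℝ) / 2) ^ n :=
          pow_le_pow_of_le_one (by norm_num) (by norm_num) (le_of_lt hmn)
      _ < ε := hn
end

section
/- Let Γ(ℵ₁) be the ℵ₁-half graph: the graph with vertex set {a_α : α < ω₁} ∪ {b_β : β < ω₁} (all vertices distinct) and edge relation given by a_α E b_β if and only if α < β. Then there is no metric on the vertex set of Γ(ℵ₁) which induces a separable topology in which the edge relation E is a closed subset of the product of the vertex set with itself. -/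
/-- The countable ordinals, i.e. the ordinals below `ω₁`. -/
def CountableOrdinals : Type 1 := {o : Ordinal // o < (Cardinal.aleph 1).ord}

/-- The vertex set of the `ℵ₁`-half graph: two disjoint copies
`{a_α : α < ω₁}` (left) and `{b_β : β < ω₁}` (right) of the countable
ordinals. -/
def HalfGraphVertices : Type 1 := CountableOrdinals ⊕ CountableOrdinals

/-- The edge relation of the `ℵ₁`-half graph: `a_α E b_β` iff `α < β`
(symmetrized), and no other edges. -/
def halfGraphEdge : HalfGraphVertices → HalfGraphVertices → Prop
  | Sum.inl a, Sum.inr b => a.1 < b.1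
  | Sum.inr b, Sum.inl a => a.1 < b.1
  | _, _ => False

/-- Left vertex `a_α`. -/
def av (α : CountableOrdinals) : HalfGraphVertices := Sum.inl α

/-- Right vertex `b_β`. -/
def bv (β : CountableOrdinals) : HalfGraphVertices := Sum.inr β

lemma edge_av_bv (γ δ : CountableOrdinals) : halfGraphEdge (av γ) (bv δ) ↔ γ.1 < δ.1 :=
  Iff.rfl

/-- The countable ordinals form an uncountable type. -/
lemma not_countable_CountableOrdinals : ¬ Countable CountableOrdinals := by
  intro h
  have h2 : Cardinal.mk CountableOrdinals
      = Cardinal.lift.{1} ((Cardinal.aleph 1).ord.card) :=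
    Ordinal.mk_Iio_ordinal (Cardinal.aleph 1).ord
  rw [Cardinal.card_ord] at h2
  have h1 : Cardinal.mk CountableOrdinals ≤ Cardinal.aleph0 := Cardinal.mk_le_aleph0
  rw [h2, ← Cardinal.lift_aleph0.{1,0}, Cardinal.lift_le] at h1
  exact absurd (lt_of_lt_of_le Cardinal.aleph0_lt_aleph_one.{0} (by simpa using h1)) (lt_irrefl _)

/-- There is no metric on the vertex set of the `ℵ₁`-half graph `Γ(ℵ₁)` which
induces a separable topology in which the edge relation is a closed subset of
the product of the vertex set with itself. -/
theorem no_sepClosedMetric_halfGraph_aleph1 :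
    ¬ ∃ m : MetricSpace HalfGraphVertices,
      SepClosedMetric m {q : HalfGraphVertices × HalfGraphVertices | halfGraphEdge q.1 q.2} := by
  rintro ⟨m, hsep, hclosed⟩
  letI : MetricSpace HalfGraphVertices := m
  haveI : TopologicalSpace.SeparableSpace HalfGraphVertices := hsep
  obtain ⟨D, hDcount, hDdense⟩ :=
    TopologicalSpace.exists_countable_dense HalfGraphVertices
  set E : Set (HalfGraphVertices × HalfGraphVertices) :=
    {q | halfGraphEdge q.1 q.2} with hE
  have hopen : IsOpen Eᶜ := hclosed.isOpen_compl
  -- Since `(a_α, b_α)` is a non-edge and `E` is closed, there is an `E`-free box around it.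
  have key : ∀ α : CountableOrdinals, ∃ r > (0:ℝ), ∀ x y : HalfGraphVertices,
      dist x (av α) < r → dist y (bv α) < r → (x, y) ∉ E := by
    intro α
    have hmem : ((av α, bv α) : HalfGraphVertices × HalfGraphVertices) ∈ Eᶜ := by
      intro hc
      exact absurd (show α.1 < α.1 from hc) (lt_irrefl _)
    rcases Metric.isOpen_iff.1 hopen _ hmem with ⟨r, hrr, hball⟩
    refine ⟨r, hrr, fun x y hx hy hxy => ?_⟩
    have hmem2 : ((x, y) : HalfGraphVertices × HalfGraphVertices) ∈ Eᶜ := by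
      apply hball
      rw [Metric.mem_ball, Prod.dist_eq]
      exact max_lt hx hy
    exact hmem2 hxy
  choose r hr hrE using key
  choose n hn using fun α => exists_nat_one_div_lt (half_pos (hr α))
  -- Approximate each `a_α` by a point of the countable dense set `D`.
  have hdd0 : ∀ α : CountableOrdinals, ∃ d ∈ D, dist (av α) d < 1 / (n α + 1 : ℝ) := by
    intro α
    exact Metric.mem_closure_iff.1 (hDdense _) _ (by positivity)
  choose dd hddD hdd using hdd0
  haveI : Countable D := hDcount.to_subtype
  -- Pigeonhole: the map `α ↦ (n_α, d_α)` into a countable type cannot be injective.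
  set F : CountableOrdinals → ℕ × D := fun α => (n α, ⟨dd α, hddD α⟩) with hF
  have hFni : ¬ Function.Injective F := by
    intro hinj
    exact not_countable_CountableOrdinals (Function.Injective.countable hinj)
  obtain ⟨α, β, hFeq, hne⟩ := Function.not_injective_iff.1 hFni
  have hn' : n α = n β := congrArg Prod.fst hFeq
  have hdd' : dd α = dd β := congrArg Subtype.val (congrArg Prod.snd hFeq)
  -- If `γ < δ` share the same data, the edge `(a_γ, b_δ)` lies in `δ`'s `E`-free box.
  have main : ∀ γ δ : CountableOrdinals, γ.1 < δ.1 → n γ = n δ → dd γ = dd δ → False := by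
    intro γ δ hlt hnn hdddd
    have h1 : dist (av γ) (av δ) < r δ := by
      have t1 : dist (av γ) (av δ) ≤ dist (av γ) (dd γ) + dist (dd δ) (av δ) := by
        rw [hdddd]; exact dist_triangle _ _ _
      have t2 : dist (dd δ) (av δ) < 1 / (n δ + 1 : ℝ) := by
        rw [dist_comm]; exact hdd δ
      have t3 : dist (av γ) (dd γ) < 1 / (n δ + 1 : ℝ) := by
        rw [← hnn]; exact hdd γ
      have t4 := hn δ
      linarith
    have h2 : dist (bv δ) (bv δ) < r δ := by
      rw [dist_self]; exact hr δ
    exact hrE δ (av γ) (bv δ) h1 h2 ((edge_av_bv γ δ).2 hlt)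
  rcases lt_trichotomy α.1 β.1 with h | h | h
  · exact main α β h hn' hdd'
  · exact hne (Subtype.ext h)
  · exact main β α h hn'.symm hdd'.symm
end
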